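/- arXiv:math/0010183 — 6 statements merged into one kernel-verified Lean document; each statement's English description precedes it below -/
import Mathlib

section
/- Let (λ_k)_{1≤k≤N}, N ≤ ∞, satisfy condition (1). Then there exist positive constants C₁ and C₂ such that for every λ ∈ ℂ with |λ| > C₂ the product defining the Blaschke product B(λ) converges and |B(λ)| < C₁. -/
/-- For a (finite or countable) family `(λ_k)` of complex numbers
satisfying condition (1) (`Re λ_k < 0`, `∑ |Re λ_k| < ∞`, imaginary parts uniformly
bounded), there are positive constants `C₁, C₂` such that for every `λ ∈ ℂ` with
`|λ| > C₂` the Blaschke product `B(λ) = ∏_k (λ + conj λ_k)/(λ - λ_k)` converges and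
`|B(λ)| < C₁`. -/
theorem stmt_0 {ι : Type*} [Countable ι] (l : ι → ℂ)
    (h1 : ∀ k, (l k).re < 0)
    (h2 : Summable fun k => |(l k).re|)
    (h3 : ∃ R > (0:ℝ), ∀ k, |(l k).im| < R) :
    ∃ C₁ > (0:ℝ), ∃ C₂ > (0:ℝ), ∀ z : ℂ, C₂ < ‖z‖ →
      Multipliable (fun k => (z + (starRingEnd ℂ) (l k)) / (z - l k)) ∧
      ‖∏' k, (z + (starRingEnd ℂ) (l k)) / (z - l k)‖ < C₁ := by
  obtain ⟨R, hR, hRk⟩ := h3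
  set S := ∑' k, |(l k).re| with hS
  have hS0 : 0 ≤ S := tsum_nonneg fun k => abs_nonneg _
  have hreS : ∀ k, |(l k).re| ≤ S := fun k =>
    Summable.le_tsum h2 k fun j _ => abs_nonneg _
  set M := S + R + 1 with hM
  have hM1 : (1:ℝ) ≤ M := by linarith
  have hlk : ∀ k, ‖l k‖ ≤ M := by
    intro k
    calc ‖l k‖ ≤ |(l k).re| + |(l k).im| := Complex.norm_le_abs_re_add_abs_im _
      _ ≤ S + R := add_le_add (hreS k) (hRk k).le
      _ ≤ M := by linarith
  refine ⟨Real.exp (3 * S) + 1, by positivity, 5 * M, by linarith, fun z hz => ?_⟩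
  have hzM : 5 * M < ‖z‖ := hz
  have hden4 : ∀ k, 4 * M ≤ ‖z - l k‖ := by
    intro k
    have h' : ‖z‖ - ‖l k‖ ≤ ‖z - l k‖ := norm_sub_norm_le z (l k)
    have := hlk k
    linarith
  have hden : ∀ k, 4 ≤ ‖z - l k‖ := fun k => le_trans (by linarith) (hden4 k)
  have hdpos : ∀ k, z - l k ≠ 0 := by
    intro k h
    have := hden k
    rw [h, norm_zero] at this
    linarith
  have hnum : ∀ k, z + (starRingEnd ℂ) (l k) ≠ 0 := by
    intro k h
    have h1' : ‖(starRingEnd ℂ) (l k)‖ ≤ M := by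
      rw [RingHomIsometric.norm_map]; exact hlk k
    have : ‖z‖ = ‖(starRingEnd ℂ) (l k)‖ := by
      have hzeq : z = -(starRingEnd ℂ) (l k) := by linear_combination h
      rw [hzeq, norm_neg]
    linarith
  have hne : ∀ k, (z + (starRingEnd ℂ) (l k)) / (z - l k) ≠ 0 :=
    fun k => div_ne_zero (hnum k) (hdpos k)
  -- rewrite each factor as 1 + u k with u k small
  have hfac : ∀ k, (z + (starRingEnd ℂ) (l k)) / (z - l k)
      = 1 + (2 * ((l k).re : ℂ)) / (z - l k) := by
    intro k
    have hnum_eq : z + (starRingEnd ℂ) (l k) = (z - l k) + 2 * ((l k).re : ℂ) := by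
      have h := Complex.add_conj (l k)
      push_cast at h ⊢
      linear_combination h
    rw [hnum_eq, add_div, div_self (hdpos k)]
  have hu_norm : ∀ k, ‖(2 * ((l k).re : ℂ)) / (z - l k)‖ ≤ |(l k).re| / 2 := by
    intro k
    rw [norm_div]
    have h2n : ‖(2 * ((l k).re : ℂ))‖ = 2 * |(l k).re| := by
      rw [norm_mul]
      simp [Complex.norm_real]
    rw [h2n]
    rw [div_le_div_iff₀ (lt_of_lt_of_le (by norm_num) (hden k)) (by norm_num)]
    have := hden k
    nlinarith [abs_nonneg (l k).re]
  have hu_half : ∀ k, ‖(2 * ((l k).re : ℂ)) / (z - l k)‖ ≤ 1 / 2 := by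
    intro k
    rw [norm_div]
    have h2n : ‖(2 * ((l k).re : ℂ))‖ = 2 * |(l k).re| := by
      rw [norm_mul]
      simp [Complex.norm_real]
    rw [h2n, div_le_iff₀ (lt_of_lt_of_le (by norm_num : (0:ℝ) < 4) (hden k))]
    have h4 := hden4 k
    have h5 := hreS k
    linarith
  -- bound on the logarithm of each factor
  have hlog : ∀ k, ‖Complex.log ((z + (starRingEnd ℂ) (l k)) / (z - l k))‖
      ≤ 3 * |(l k).re| := by
    intro k
    rw [hfac k]
    refine le_trans (Complex.norm_log_one_add_half_le_self (hu_half k)) ?_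
    have := hu_norm k
    nlinarith [abs_nonneg (l k).re]
  have hnormsum : Summable fun k => ‖Complex.log ((z + (starRingEnd ℂ) (l k)) / (z - l k))‖ :=
    Summable.of_nonneg_of_le (fun k => norm_nonneg _) hlog (h2.mul_left 3)
  have hsumlog : Summable fun k => Complex.log ((z + (starRingEnd ℂ) (l k)) / (z - l k)) :=
    hnormsum.of_norm
  have hprod : HasProd (fun k => (z + (starRingEnd ℂ) (l k)) / (z - l k))
      (Complex.exp (∑' k, Complex.log ((z + (starRingEnd ℂ) (l k)) / (z - l k)))) :=
    hsumlog.hasSum.cexp.congr_fun fun k => (Complex.exp_log (hne k)).symm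
  refine ⟨⟨_, hprod⟩, ?_⟩
  rw [hprod.tprod_eq]
  have hre : ‖Complex.exp (∑' k, Complex.log ((z + (starRingEnd ℂ) (l k)) / (z - l k)))‖
      = Real.exp (∑' k, Complex.log ((z + (starRingEnd ℂ) (l k)) / (z - l k))).re :=
    Complex.norm_exp _
  rw [hre]
  have hb1 : (∑' k, Complex.log ((z + (starRingEnd ℂ) (l k)) / (z - l k))).re
      ≤ ‖∑' k, Complex.log ((z + (starRingEnd ℂ) (l k)) / (z - l k))‖ :=
    Complex.re_le_norm _
  have hb2 : ‖∑' k, Complex.log ((z + (starRingEnd ℂ) (l k)) / (z - l k))‖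
      ≤ ∑' k, ‖Complex.log ((z + (starRingEnd ℂ) (l k)) / (z - l k))‖ :=
    norm_tsum_le_tsum_norm hnormsum
  have hb3 : (∑' k, ‖Complex.log ((z + (starRingEnd ℂ) (l k)) / (z - l k))‖)
      ≤ ∑' k, 3 * |(l k).re| := Summable.tsum_le_tsum hlog hnormsum (h2.mul_left 3)
  have hb4 : (∑' k, 3 * |(l k).re|) = 3 * S := by
    rw [hS, tsum_mul_left]
  have : Real.exp (∑' k, Complex.log ((z + (starRingEnd ℂ) (l k)) / (z - l k))).re
      ≤ Real.exp (3 * S) := Real.exp_le_exp.mpr (by linarith [hb4 ▸ hb3])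
  linarith
end

section
/- Let (λ_k)_{1≤k≤N}, N ≤ ∞, satisfy condition (1), and set s = −∑_k Re λ_k, so 0 < s < ∞. Then the Blaschke product satisfies B(λ) = 1 − 2s/λ + o(1/λ) as |λ| → ∞; equivalently, λ·(B(λ) − 1) → −2s as |λ| → ∞. -/
open Filter Complex Topology


/-- Under condition (1), with `s = -∑_k Re λ_k` one has `0 < s < ∞`, and
the Blaschke product `B(λ) = ∏_k (λ + conj λ_k)/(λ - λ_k)` satisfies
`B(λ) = 1 - 2s/λ + o(1/λ)` as `|λ| → ∞`; equivalently `λ·(B(λ) - 1) → -2s`. -/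
theorem stmt_1 {ι : Type*} [Countable ι] [Nonempty ι] (l : ι → ℂ)
    (h1 : ∀ k, (l k).re < 0)
    (h2 : Summable fun k => |(l k).re|)
    (h3 : ∃ R > (0:ℝ), ∀ k, |(l k).im| < R)
    (s : ℝ) (hs : s = -∑' k, (l k).re) :
    0 < s ∧
    Filter.Tendsto
      (fun z : ℂ => z * ((∏' k, (z + (starRingEnd ℂ) (l k)) / (z - l k)) - 1))
      (Filter.comap (fun z : ℂ => ‖z‖) Filter.atTop)
      (nhds ((-2 * s : ℝ) : ℂ)) := by
  obtain ⟨R, hR0, hR⟩ := h3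
  have hs' : s = ∑' k, |(l k).re| := by
    rw [hs, ← tsum_neg]
    exact tsum_congr fun k => (abs_of_neg (h1 k)).symm
  have hspos : 0 < s := by
    rw [hs']
    exact Summable.tsum_pos h2 (fun k => abs_nonneg _) (Classical.arbitrary ι)
      (abs_pos.mpr (h1 _).ne)
  refine ⟨hspos, ?_⟩
  have hRele : ∀ k, |(l k).re| ≤ s := by
    intro k
    rw [hs']
    exact Summable.le_tsum h2 k fun j _ => abs_nonneg _
  set M : ℝ := s + R with hMdef
  have hMpos : 0 < M := by positivity
  have hlM : ∀ k, ‖l k‖ ≤ M := by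
    intro k
    exact (Complex.norm_le_abs_re_add_abs_im _).trans (add_le_add (hRele k) (hR k).le)
  set C : ℝ := 2 * M + 8 * s + 1 with hCdef
  set L : Filter ℂ := Filter.comap (fun z : ℂ => ‖z‖) Filter.atTop with hLdef
  have htends : Tendsto (fun z : ℂ => ‖z‖) L atTop := tendsto_comap
  have hbig : ∀ᶠ z in L, C ≤ ‖z‖ := htends.eventually_ge_atTop C
  -- basic per-z facts
  set a : ι → ℂ → ℂ := fun k z => ((2 * (l k).re : ℝ) : ℂ) / (z - l k) with hadef
  have key : ∀ z : ℂ, C ≤ ‖z‖ →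
      (0 < ‖z‖) ∧ (∀ k, ‖z‖ / 2 ≤ ‖z - l k‖) ∧ (∀ k, z - l k ≠ 0) ∧
      (∀ k, ‖a k z‖ ≤ 4 * |(l k).re| / ‖z‖) ∧ (∀ k, ‖a k z‖ ≤ 1 / 2) := by
    intro z hz
    have hzpos : 0 < ‖z‖ := by have := hRele (Classical.arbitrary ι); nlinarith
    have hsub : ∀ k, ‖z‖ / 2 ≤ ‖z - l k‖ := by
      intro k
      have h1' := norm_sub_norm_le z (l k)
      have := hlM k
      nlinarith
    have hne : ∀ k, z - l k ≠ 0 := by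
      intro k h
      have := hsub k
      rw [h, norm_zero] at this
      nlinarith
    have hna : ∀ k, ‖a k z‖ ≤ 4 * |(l k).re| / ‖z‖ := by
      intro k
      rw [hadef]
      simp only [norm_div, Complex.norm_real, Real.norm_eq_abs]
      rw [abs_mul, _root_.abs_two]
      calc 2 * |(l k).re| / ‖z - l k‖ ≤ 2 * |(l k).re| / (‖z‖ / 2) :=
            div_le_div_of_nonneg_left (by positivity) (by positivity) (hsub k)
        _ = 4 * |(l k).re| / ‖z‖ := by field_simp; ring
    refine ⟨hzpos, hsub, hne, hna, fun k => (hna k).trans ?_⟩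
    rw [div_le_iff₀ hzpos]
    have := hRele k
    nlinarith
  -- log bounds and product = exp of sum of logs
  set T : ℂ → ℂ := fun z => ∑' k, Complex.log (1 + a k z) with hTdef
  have hlogb : ∀ z : ℂ, C ≤ ‖z‖ → ∀ k,
      ‖Complex.log (1 + a k z)‖ ≤ 6 * |(l k).re| / ‖z‖ := by
    intro z hz k
    obtain ⟨hzpos, -, -, hna, hhalf⟩ := key z hz
    refine (Complex.norm_log_one_add_half_le_self (hhalf k)).trans ?_
    have h := hna k
    calc (3:ℝ)/2 * ‖a k z‖ ≤ 3/2 * (4 * |(l k).re| / ‖z‖) := by linarith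
      _ = 6 * |(l k).re| / ‖z‖ := by ring
  have hsumlog : ∀ z : ℂ, C ≤ ‖z‖ → Summable fun k => Complex.log (1 + a k z) := by
    intro z hz
    exact Summable.of_norm_bounded ((h2.mul_left 6).div_const ‖z‖) (hlogb z hz)
  have hane : ∀ z : ℂ, C ≤ ‖z‖ → ∀ k, (1 : ℂ) + a k z ≠ 0 := by
    intro z hz k h
    obtain ⟨-, -, -, -, hhalf⟩ := key z hz
    have ha1 : a k z = -1 := by linear_combination h
    have hh := hhalf k
    rw [ha1] at hh
    norm_num at hh
  have hfeq : ∀ z : ℂ, C ≤ ‖z‖ → ∀ k,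
      (z + (starRingEnd ℂ) (l k)) / (z - l k) = 1 + a k z := by
    intro z hz k
    obtain ⟨-, -, hne, -, -⟩ := key z hz
    have heq : (1:ℂ) + a k z = ((z - l k) + ((2 * (l k).re : ℝ) : ℂ)) / (z - l k) := by
      rw [hadef]
      rw [add_div, div_self (hne k)]
    rw [heq]
    congr 1
    rw [← Complex.add_conj]
    ring
  have hprod : ∀ z : ℂ, C ≤ ‖z‖ →
      (∏' k, (z + (starRingEnd ℂ) (l k)) / (z - l k)) = Complex.exp (T z) := by
    intro z hz
    have h1p := (hsumlog z hz).hasSum.cexp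
    have h2p : HasProd (fun k => (z + (starRingEnd ℂ) (l k)) / (z - l k))
        (Complex.exp (T z)) := by
      have hfun : (Complex.exp ∘ fun k => Complex.log (1 + a k z)) =
          fun k => (z + (starRingEnd ℂ) (l k)) / (z - l k) := by
        funext k
        simp only [Function.comp_apply]
        rw [Complex.exp_log (hane z hz k), hfeq z hz k]
      exact hfun ▸ h1p
    exact h2p.tprod_eq
  -- limits
  have h0lt1 : (0:ℝ) < 1 := one_pos
  have hinv : Tendsto (fun z : ℂ => z⁻¹) L (𝓝 0) := by
    rw [hLdef, comap_norm_atTop]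
    exact tendsto_inv₀_cobounded
  have hnormk : ∀ k, Tendsto (fun z : ℂ => ‖z - l k‖) L atTop := by
    intro k
    refine tendsto_atTop_mono' L ?_ (tendsto_atTop_add_const_right _ (-M) htends)
    filter_upwards with z
    have := norm_sub_norm_le z (l k)
    have := hlM k
    linarith
  have hinvk : ∀ k, Tendsto (fun z : ℂ => (z - l k)⁻¹) L (𝓝 0) := by
    intro k
    rw [tendsto_zero_iff_norm_tendsto_zero]
    simpa only [norm_inv, Function.comp_def] using tendsto_inv_atTop_zero.comp (hnormk k)
  have hzdiv : ∀ k, Tendsto (fun z : ℂ => z / (z - l k)) L (𝓝 1) := by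
    intro k
    have h1' : Tendsto (fun z : ℂ => 1 + l k * (z - l k)⁻¹) L (𝓝 (1 + l k * 0)) :=
      tendsto_const_nhds.add (((hinvk k).const_mul (l k)))
    rw [mul_zero, add_zero] at h1'
    refine h1'.congr' ?_
    filter_upwards [hbig] with z hz
    obtain ⟨-, -, hne, -, -⟩ := key z hz
    show 1 + l k * (z - l k)⁻¹ = z / (z - l k)
    rw [← div_eq_mul_inv, add_div' _ _ _ (hne k)]
    congr 1
    ring
  -- pointwise limit of z * log(1 + a k z)
  have hinvnorm : Tendsto (fun z : ℂ => ‖z‖⁻¹) L (𝓝 0) := tendsto_inv_atTop_zero.comp htends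
  have hg : ∀ k, Tendsto (fun z : ℂ => z * Complex.log (1 + a k z)) L
      (𝓝 (((2 * (l k).re : ℝ) : ℂ))) := by
    intro k
    have part1 : Tendsto (fun z : ℂ => ((2 * (l k).re : ℝ) : ℂ) * (z / (z - l k))) L
        (𝓝 (((2 * (l k).re : ℝ) : ℂ) * 1)) := (hzdiv k).const_mul _
    rw [mul_one] at part1
    have part2 : Tendsto (fun z : ℂ => z * (Complex.log (1 + a k z) - a k z)) L (𝓝 0) := by
      rw [tendsto_zero_iff_norm_tendsto_zero]
      have hb : Tendsto (fun z : ℂ => 16 * (l k).re ^ 2 * ‖z‖⁻¹) L (𝓝 (16 * (l k).re ^ 2 * 0)) :=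
        hinvnorm.const_mul _
      rw [mul_zero] at hb
      refine squeeze_zero' (Filter.Eventually.of_forall fun z => norm_nonneg _) ?_ hb
      filter_upwards [hbig] with z hz
      obtain ⟨hzpos, -, -, hna, hhalf⟩ := key z hz
      have hlt1 : ‖a k z‖ < 1 := lt_of_le_of_lt (hhalf k) (by norm_num)
      have hlog := Complex.norm_log_one_add_sub_self_le hlt1
      have hinv2 : (1 - ‖a k z‖)⁻¹ ≤ 2 := by
        have h12 : (1:ℝ)/2 ≤ 1 - ‖a k z‖ := by have := hhalf k; linarith
        have := inv_anti₀ (by norm_num : (0:ℝ) < 1/2) h12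
        simpa using this
      have hsq : ‖Complex.log (1 + a k z) - a k z‖ ≤ ‖a k z‖ ^ 2 := by
        nlinarith [norm_nonneg (a k z), sq_nonneg (‖a k z‖)]
      have hna2 : ‖a k z‖ ^ 2 ≤ (4 * |(l k).re| / ‖z‖) ^ 2 := by
        have := hna k
        have := norm_nonneg (a k z)
        nlinarith
      rw [norm_mul]
      calc ‖z‖ * ‖Complex.log (1 + a k z) - a k z‖ ≤ ‖z‖ * (4 * |(l k).re| / ‖z‖) ^ 2 := by
            have := hsq.trans hna2
            exact mul_le_mul_of_nonneg_left this hzpos.le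
        _ = 16 * (l k).re ^ 2 * ‖z‖⁻¹ := by
            have aux : ∀ x r : ℝ, x ≠ 0 → x * (4 * r / x) ^ 2 = 16 * r ^ 2 * x⁻¹ := by
              intro x r hx
              field_simp
              ring
            have h := aux ‖z‖ |(l k).re| hzpos.ne'
            rw [_root_.sq_abs] at h
            exact h
    have := part1.add part2
    rw [add_zero] at this
    refine this.congr fun z => ?_
    rw [hadef]
    ring
  -- z * T z tends to -2s
  have hzT : Tendsto (fun z : ℂ => z * T z) L (𝓝 ((-2 * s : ℝ) : ℂ)) := by
    have hdom := tendsto_tsum_of_dominated_convergence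
      (f := fun (z : ℂ) (k : ι) => z * Complex.log (1 + a k z))
      (g := fun k => ((2 * (l k).re : ℝ) : ℂ))
      (bound := fun k => 6 * |(l k).re|) (𝓕 := L)
      (h2.mul_left 6) hg ?_
    · have hre : (∑' k, (2 * (l k).re : ℝ)) = -2 * s := by
        have h' : ∑' k, (l k).re = -s := by rw [hs]; ring
        rw [tsum_mul_left, h']
        ring
      have hval : (∑' k, ((2 * (l k).re : ℝ) : ℂ)) = ((-2 * s : ℝ) : ℂ) := by
        rw [← Complex.ofReal_tsum, hre]
      rw [hval] at hdom
      refine hdom.congr fun z => ?_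
      rw [hTdef]
      exact tsum_mul_left
    · filter_upwards [hbig] with z hz
      intro k
      obtain ⟨hzpos, -, -, -, -⟩ := key z hz
      rw [norm_mul]
      calc ‖z‖ * ‖Complex.log (1 + a k z)‖ ≤ ‖z‖ * (6 * |(l k).re| / ‖z‖) :=
            mul_le_mul_of_nonneg_left (hlogb z hz k) hzpos.le
        _ = 6 * |(l k).re| := by
            rw [mul_comm, div_mul_cancel₀ _ hzpos.ne']
  -- T tends to 0
  have hT0 : Tendsto T L (𝓝 0) := by
    have := hzT.mul hinv
    rw [mul_zero] at this
    refine this.congr' ?_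
    filter_upwards [hbig] with z hz
    obtain ⟨hzpos, -, -, -, -⟩ := key z hz
    have hz0 : z ≠ 0 := by
      intro h
      rw [h, norm_zero] at hzpos
      exact lt_irrefl _ hzpos
    show z * T z * z⁻¹ = T z
    rw [mul_comm z (T z), mul_assoc, mul_inv_cancel₀ hz0, mul_one]
  -- remainder term
  have hrem : Tendsto (fun z : ℂ => z * (Complex.exp (T z) - 1 - T z)) L (𝓝 0) := by
    rw [tendsto_zero_iff_norm_tendsto_zero]
    have hb : Tendsto (fun z : ℂ => ‖z * T z‖ * ‖T z‖) L (𝓝 (‖((-2 * s : ℝ) : ℂ)‖ * ‖(0:ℂ)‖)) :=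
      hzT.norm.mul hT0.norm
    rw [norm_zero, mul_zero] at hb
    refine squeeze_zero' (Filter.Eventually.of_forall fun z => norm_nonneg _) ?_ hb
    have hTsmall : ∀ᶠ z in L, ‖T z‖ ≤ 1 := by
      have := hT0.norm
      rw [norm_zero] at this
      exact (this.eventually_lt_const h0lt1).mono fun z hz => hz.le
    filter_upwards [hTsmall] with z hz
    rw [norm_mul, norm_mul]
    have hexp : ‖Complex.exp (T z) - 1 - T z‖ ≤ ‖T z‖ ^ 2 := by
      exact Complex.norm_exp_sub_one_sub_id_le (x := T z) hz
    calc ‖z‖ * ‖Complex.exp (T z) - 1 - T z‖ ≤ ‖z‖ * (‖T z‖ * ‖T z‖) := by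
          rw [← sq]; exact mul_le_mul_of_nonneg_left hexp (norm_nonneg z)
      _ = ‖z‖ * ‖T z‖ * ‖T z‖ := by ring
  -- final assembly
  have hfinal := hzT.add hrem
  rw [add_zero] at hfinal
  refine hfinal.congr' ?_
  filter_upwards [hbig] with z hz
  rw [hprod z hz]
  ring
end

section
/- For every μ ∈ ℂ with Re μ < 0 and every t ≥ 0, let f ∈ K be the truncated exponential f(x) = e^{μx} for x > t and f(x) = 0 for 0 < x < t. Then ⟨Θf, f⟩ = B(−conj(μ))·‖f‖², where ‖f‖² = e^{2t·Re μ}/(−2 Re μ). -/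
open MeasureTheory ComplexInnerProductSpace

noncomputable section

/-- The measure defining `K = L²(0,∞)`. -/
def mu0 : Measure ℝ := volume.restrict (Set.Ioi (0:ℝ))

/-- The Hilbert space `K = L²(0,∞)`. -/
abbrev Kspace := Lp ℂ 2 mu0

/-- The Laplace transform `(Lf)(λ) = ∫₀^∞ e^{-λx} f(x) dx` of `f ∈ K`. -/
def Laplace (f : Kspace) (z : ℂ) : ℂ := ∫ x : ℝ, Complex.exp (-z * x) * f x ∂mu0

lemma norm_cexp_mul (w : ℂ) (x : ℝ) : ‖Complex.exp (w * x)‖ = Real.exp (w.re * x) := by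
  rw [Complex.norm_exp]
  congr 1
  simp [Complex.mul_re]

lemma integrableOn_cexp {w : ℂ} (hw : w.re < 0) (a : ℝ) :
    IntegrableOn (fun x : ℝ => Complex.exp (w * x)) (Set.Ioi a) := by
  refine Integrable.mono' (g := fun x => Real.exp (-(-w.re) * x))
    (exp_neg_integrableOn_Ioi a (neg_pos.2 hw)) ?_ ?_
  · exact (Complex.continuous_exp.comp (continuous_const.mul Complex.continuous_ofReal)).aestronglyMeasurable
  · filter_upwards with x
    rw [norm_cexp_mul]
    simp

lemma integral_cexp_Ioi {w : ℂ} (hw : w.re < 0) (a : ℝ) :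
    ∫ x in Set.Ioi a, Complex.exp (w * x) = -Complex.exp (w * a) / w := by
  have hw0 : w ≠ 0 := by
    intro h; rw [h] at hw; simp at hw
  have hderiv : ∀ x ∈ Set.Ici a, HasDerivAt (fun x : ℝ => Complex.exp (w * x) / w)
      (Complex.exp (w * x)) x := by
    intro x _
    have h1 : HasDerivAt (fun z : ℂ => Complex.exp (w * z) / w) (Complex.exp (w * x)) (x : ℂ) := by
      have h2 : HasDerivAt (fun z : ℂ => w * z) w (x : ℂ) := by
        simpa using (hasDerivAt_id (x:ℂ)).const_mul w
      have h3 := (Complex.hasDerivAt_exp (w * x)).comp (x:ℂ) h2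
      have h4 := h3.div_const w
      have he : Complex.exp (w * (x:ℂ)) * w / w = Complex.exp (w * (x:ℂ)) := by
        field_simp
      rw [he] at h4
      exact h4
    exact h1.comp_ofReal
  have htend : Filter.Tendsto (fun x : ℝ => Complex.exp (w * x) / w) Filter.atTop (nhds 0) := by
    rw [tendsto_zero_iff_norm_tendsto_zero]
    have : (fun x : ℝ => ‖Complex.exp (w * x) / w‖) = fun x => Real.exp (w.re * x) / ‖w‖ := by
      funext x; rw [norm_div, norm_cexp_mul]
    rw [this]
    have h0 : Filter.Tendsto (fun x : ℝ => Real.exp (w.re * x)) Filter.atTop (nhds 0) := by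
      apply Real.tendsto_exp_atBot.comp
      exact Filter.Tendsto.const_mul_atTop_of_neg hw Filter.tendsto_id
    simpa using h0.div_const ‖w‖
  have := integral_Ioi_of_hasDerivAt_of_tendsto
    (f := fun x : ℝ => Complex.exp (w * x) / w) (f' := fun x : ℝ => Complex.exp (w * x))
    ((hderiv a Set.self_mem_Ici).continuousAt.continuousWithinAt)
    (fun x hx => hderiv x (Set.mem_Ici_of_Ioi hx)) (integrableOn_cexp hw a) htend
  rw [this]
  ring

lemma memL2_cexp {w : ℂ} (hw : w.re < 0) :
    MemLp (fun x : ℝ => Complex.exp (w * x)) 2 mu0 := by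
  have haesm : AEStronglyMeasurable (fun x : ℝ => Complex.exp (w * x)) mu0 :=
    (Complex.continuous_exp.comp (continuous_const.mul Complex.continuous_ofReal)).aestronglyMeasurable
  rw [memLp_two_iff_integrable_sq_norm haesm]
  have : (fun x : ℝ => ‖Complex.exp (w * x)‖ ^ 2) = fun x : ℝ => Real.exp (-(-(2*w.re)) * x) := by
    funext x
    rw [norm_cexp_mul, ← Real.exp_nat_mul]
    ring_nf
  rw [this]
  exact exp_neg_integrableOn_Ioi 0 (by linarith)

lemma integrable_mul_L2 {φ h : ℝ → ℂ} (hφ : MemLp φ 2 mu0) (hh : MemLp h 2 mu0) :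
    Integrable (fun x => φ x * h x) mu0 := by
  rw [← memLp_one_iff_integrable]
  have := hh.smul (φ := φ) hφ (p := 2) (q := 2) (r := 1) (hpqr := ⟨by rw [inv_one]; exact ENNReal.inv_two_add_inv_two⟩)
  exact this

lemma mp_sub (t : ℝ) (ht : 0 ≤ t) :
    MeasurePreserving (fun x : ℝ => x - t) (volume.restrict (Set.Ioi t)) mu0 := by
  have h1 : MeasurePreserving (fun x : ℝ => x - t) volume volume :=
    measurePreserving_sub_right volume t
  have h2 := h1.restrict_preimage (s := Set.Ioi (0:ℝ)) measurableSet_Ioi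
  have : (fun x : ℝ => x - t) ⁻¹' Set.Ioi (0:ℝ) = Set.Ioi t := by
    ext x; simp [sub_pos]
  rwa [this] at h2

lemma emb_sub (t : ℝ) : MeasurableEmbedding (fun x : ℝ => x - t) :=
  (MeasurableEquiv.subRight t).measurableEmbedding

lemma int_ind (t : ℝ) (ht : 0 ≤ t) (ψ : ℝ → ℂ) :
    ∫ x, (Set.Ioi t).indicator ψ x ∂mu0 = ∫ x in Set.Ioi t, ψ x := by
  rw [integral_indicator measurableSet_Ioi]
  show ∫ x, ψ x ∂(mu0.restrict (Set.Ioi t)) = _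
  rw [mu0, Measure.restrict_restrict measurableSet_Ioi, Set.Ioi_inter_Ioi,
    max_eq_left ht]

lemma int_trans (t : ℝ) (ht : 0 ≤ t) (ψ : ℝ → ℂ) :
    ∫ x in Set.Ioi t, ψ (x - t) = ∫ y, ψ y ∂mu0 :=
  (mp_sub t ht).integral_comp (emb_sub t) ψ

lemma locint {h : ℝ → ℂ} (hh : MemLp h 2 mu0) : LocallyIntegrable h mu0 := by
  intro x
  refine ⟨Metric.ball x 1, Metric.ball_mem_nhds x one_pos, ?_⟩
  have : IsFiniteMeasure (mu0.restrict (Metric.ball x 1)) := by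
    constructor
    rw [Measure.restrict_apply_univ]
    calc mu0 (Metric.ball x 1) = volume (Metric.ball x 1 ∩ Set.Ioi 0) := by
          rw [mu0, Measure.restrict_apply' measurableSet_Ioi]
      _ ≤ volume (Metric.ball x 1) := measure_mono Set.inter_subset_left
      _ < ⊤ := measure_ball_lt_top
  exact (hh.restrict _).integrable one_le_two

lemma poly_term {h : ℝ → ℂ} (hh : MemLp h 2 mu0) (q : Polynomial ℝ)
    (hL : ∀ s : ℝ, 1 ≤ s → ∫ x, Complex.exp (-(s:ℂ) * x) * h x ∂mu0 = 0) :
    Integrable (fun x => (Real.exp (-x) * q.eval (Real.exp (-x))) • h x) mu0 ∧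
    ∫ x, (Real.exp (-x) * q.eval (Real.exp (-x))) • h x ∂mu0 = 0 := by
  set N := q.natDegree + 1 with hN
  have hTmem : ∀ i : ℕ, MemLp (fun x : ℝ => Complex.exp (-(((i:ℝ)+1:ℝ):ℂ) * x)) 2 mu0 := by
    intro i
    apply memL2_cexp
    rw [Complex.neg_re, Complex.ofReal_re]
    have : (0:ℝ) < (i:ℝ) + 1 := by positivity
    linarith
  have hTint : ∀ i : ℕ, Integrable (fun x : ℝ =>
      Complex.exp (-(((i:ℝ)+1:ℝ):ℂ) * (x:ℂ)) * h x) mu0 := fun i => integrable_mul_L2 (hTmem i) hh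
  have hT0 : ∀ i : ℕ, ∫ x, Complex.exp (-(((i:ℝ)+1:ℝ):ℂ) * (x:ℂ)) * h x ∂mu0 = 0 := by
    intro i
    exact hL ((i:ℝ)+1) (by linarith [Nat.cast_nonneg (α := ℝ) i])
  have key : (fun x => (Real.exp (-x) * q.eval (Real.exp (-x))) • h x) =
      fun x : ℝ => ∑ i ∈ Finset.range N, q.coeff i •
        (Complex.exp (-(((i:ℝ)+1:ℝ):ℂ) * (x:ℂ)) * h x) := by
    funext x
    rw [Polynomial.eval_eq_sum_range, ← hN, Finset.mul_sum, Finset.sum_smul]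
    apply Finset.sum_congr rfl
    intro i _
    have e1 : Real.exp (-x) * (q.coeff i * Real.exp (-x) ^ i)
        = q.coeff i * Real.exp (-((i:ℝ)+1) * x) := by
      rw [← Real.exp_nat_mul]
      rw [show Real.exp (-x) * (q.coeff i * Real.exp ((i:ℝ) * -x))
        = q.coeff i * (Real.exp (-x) * Real.exp ((i:ℝ) * -x)) from by ring, ← Real.exp_add]
      congr 2
      ring
    rw [e1, mul_smul]
    congr 1
    rw [Complex.real_smul]
    congr 1
    rw [Complex.ofReal_exp]
    congr 1
    push_cast
    ring
  have hint2 : ∀ i : ℕ, Integrable (fun x : ℝ =>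
      q.coeff i • (Complex.exp (-(((i:ℝ)+1:ℝ):ℂ) * (x:ℂ)) * h x)) mu0 := by
    intro i
    exact (hTint i).smul (q.coeff i)
  constructor
  · rw [key]
    exact integrable_finset_sum _ (fun i _ => hint2 i)
  · rw [key, integral_finset_sum _ (fun i _ => hint2 i)]
    apply Finset.sum_eq_zero
    intro i _
    rw [integral_smul, hT0 i, smul_zero]

lemma laplace_inj {h : ℝ → ℂ} (hh : MemLp h 2 mu0)
    (hL : ∀ s : ℝ, 1 ≤ s → ∫ x, Complex.exp (-(s:ℂ) * x) * h x ∂mu0 = 0) :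
    ∀ᵐ x ∂mu0, h x = 0 := by
  apply ae_eq_zero_of_integral_contDiff_smul_eq_zero (locint hh)
  intro g hg hgsupp
  obtain ⟨M0, hM0⟩ : BddAbove (tsupport g) := (hgsupp : IsCompact (tsupport g)).bddAbove
  set M : ℝ := M0 + 1 with hMdef
  have hMz : ∀ x : ℝ, M ≤ x → g x = 0 := by
    intro x hx
    apply image_eq_zero_of_notMem_tsupport
    intro hmem
    have := hM0 hmem
    simp only [hMdef] at hx
    linarith
  set Gc : ℝ → ℝ := fun u => if 0 < u then u⁻¹ * g (-Real.log u) else 0 with hGc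
  have hGc_cont : Continuous Gc := by
    rw [continuous_iff_continuousAt]
    intro u
    rcases lt_or_ge 0 u with hu | hu
    · have hev : Gc =ᶠ[nhds u] fun v => v⁻¹ * g (-Real.log v) := by
        filter_upwards [IsOpen.mem_nhds isOpen_Ioi hu] with v hv
        simp only [hGc, if_pos (Set.mem_Ioi.mp hv)]
      rw [continuousAt_congr hev]
      exact (continuousAt_inv₀ (ne_of_gt hu)).mul
        ((hg.continuous.continuousAt).comp ((Real.continuousAt_log (ne_of_gt hu)).neg))
    · have hev : Gc =ᶠ[nhds u] fun _ => 0 := by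
        have humem : u ∈ Set.Iio (Real.exp (-M)) := lt_of_le_of_lt hu (Real.exp_pos _)
        filter_upwards [IsOpen.mem_nhds isOpen_Iio humem] with v hv
        by_cases hv0 : 0 < v
        · have hlog : Real.log v < -M := (Real.log_lt_iff_lt_exp hv0).mpr (Set.mem_Iio.mp hv)
          have : g (-Real.log v) = 0 := hMz _ (by linarith)
          simp only [hGc, if_pos hv0, this, mul_zero]
        · simp only [hGc, if_neg hv0]
      rw [continuousAt_congr hev]
      exact continuousAt_const
  have hGc_eq : ∀ x : ℝ, 0 < x → g x = Real.exp (-x) * Gc (Real.exp (-x)) := by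
    intro x _
    have : Gc (Real.exp (-x)) = (Real.exp (-x))⁻¹ * g x := by
      simp [hGc, Real.exp_pos, Real.log_exp]
    rw [this]
    field_simp
  have hgL2 : MemLp (fun x : ℝ => (g x : ℂ)) 2 mu0 := by
    have haesm : AEStronglyMeasurable (fun x : ℝ => (g x : ℂ)) mu0 :=
      (Complex.continuous_ofReal.comp hg.continuous).aestronglyMeasurable
    rw [memLp_two_iff_integrable_sq_norm haesm]
    have heq : (fun x : ℝ => ‖(g x : ℂ)‖ ^ 2) = fun x => (g * g) x := by
      funext x
      simp [Complex.norm_real, Real.norm_eq_abs, sq_abs, sq]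
    rw [heq]
    exact ((hg.continuous.mul hg.continuous).integrable_of_hasCompactSupport
      (hgsupp.mul_right)).restrict
  have hgh_int : Integrable (fun x => (g x : ℂ) * h x) mu0 := integrable_mul_L2 hgL2 hh
  have hgh_int' : Integrable (fun x => g x • h x) mu0 := by
    have : (fun x => g x • h x) = fun x => (g x : ℂ) * h x := by
      funext x; rw [Complex.real_smul]
    rw [this]; exact hgh_int
  have hC_int : Integrable (fun x => Real.exp (-x) * ‖h x‖) mu0 := by
    have h1 : Integrable (fun x : ℝ => Complex.exp (-((1:ℝ):ℂ) * (x:ℂ)) * h x) mu0 :=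
      integrable_mul_L2 (memL2_cexp (by norm_num)) hh
    have h2 := h1.norm
    have heq : (fun x : ℝ => ‖Complex.exp (-((1:ℝ):ℂ) * (x:ℂ)) * h x‖)
        = fun x => Real.exp (-x) * ‖h x‖ := by
      funext x
      rw [norm_mul, norm_cexp_mul]
      norm_num
    rwa [heq] at h2
  set C := ∫ x, Real.exp (-x) * ‖h x‖ ∂mu0 with hCdef
  have hC0 : 0 ≤ C :=
    integral_nonneg fun x => mul_nonneg (Real.exp_pos _).le (norm_nonneg _)
  have hx_pos : ∀ᵐ x ∂mu0, 0 < x := ae_restrict_mem measurableSet_Ioi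
  have hbound : ∀ ε : ℝ, 0 < ε → ‖∫ x, g x • h x ∂mu0‖ ≤ ε * C := by
    intro ε hε
    obtain ⟨q, hq⟩ := exists_polynomial_near_of_continuousOn 0 1 Gc hGc_cont.continuousOn ε hε
    obtain ⟨hPint, hP0⟩ := poly_term hh q hL
    have hsub : ∫ x, g x • h x ∂mu0
        = ∫ x, (g x • h x - (Real.exp (-x) * q.eval (Real.exp (-x))) • h x) ∂mu0 := by
      rw [integral_sub hgh_int' hPint, hP0, sub_zero]
    rw [hsub]
    have hle : ‖∫ x, (g x • h x - (Real.exp (-x) * q.eval (Real.exp (-x))) • h x) ∂mu0‖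
        ≤ ∫ x, ε * (Real.exp (-x) * ‖h x‖) ∂mu0 := by
      apply norm_integral_le_of_norm_le (hC_int.const_mul ε)
      filter_upwards [hx_pos] with x hx
      have hu1 : Real.exp (-x) ≤ 1 := by
        rw [show (1:ℝ) = Real.exp 0 from (Real.exp_zero).symm]
        exact Real.exp_le_exp.mpr (by linarith)
      have humem : Real.exp (-x) ∈ Set.Icc (0:ℝ) 1 := ⟨(Real.exp_pos _).le, hu1⟩
      have hqq := hq _ humem
      have heq2 : g x • h x - (Real.exp (-x) * q.eval (Real.exp (-x))) • h x
          = ((Real.exp (-x) * (Gc (Real.exp (-x)) - q.eval (Real.exp (-x))))) • h x := by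
        rw [← sub_smul]
        congr 1
        rw [hGc_eq x hx]
        ring
      rw [heq2, norm_smul, Real.norm_eq_abs]
      have habs : |Real.exp (-x) * (Gc (Real.exp (-x)) - q.eval (Real.exp (-x)))|
          ≤ Real.exp (-x) * ε := by
        rw [abs_mul, abs_of_pos (Real.exp_pos _)]
        apply mul_le_mul_of_nonneg_left _ (Real.exp_pos _).le
        rw [abs_sub_comm]
        exact (hqq).le
      calc |Real.exp (-x) * (Gc (Real.exp (-x)) - q.eval (Real.exp (-x)))| * ‖h x‖
          ≤ Real.exp (-x) * ε * ‖h x‖ :=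
            mul_le_mul_of_nonneg_right habs (norm_nonneg _)
        _ = ε * (Real.exp (-x) * ‖h x‖) := by ring
    calc ‖∫ x, (g x • h x - (Real.exp (-x) * q.eval (Real.exp (-x))) • h x) ∂mu0‖
        ≤ ∫ x, ε * (Real.exp (-x) * ‖h x‖) ∂mu0 := hle
      _ = ε * C := by rw [hCdef, integral_const_mul]
  have final : ∀ I : ℂ, (∀ ε : ℝ, 0 < ε → ‖I‖ ≤ ε * C) → I = 0 := by
    intro I hI
    have hIle : ‖I‖ ≤ 0 := by
      by_contra hlt
      push_neg at hlt
      have h1 := hI (‖I‖ / (2 * (C + 1))) (by positivity)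
      rw [div_mul_eq_mul_div, le_div_iff₀ (by positivity : (0:ℝ) < 2 * (C+1))] at h1
      nlinarith
    exact norm_le_zero_iff.mp hIle
  exact final _ hbound

/-- let `Θ` be the isometry of `K = L²(0,∞)` determined by
`L(Θf)(λ) = B(λ)·(Lf)(λ)` for `Re λ > 0`, where `B` is the Blaschke product of a
family `(λ_k)` satisfying condition (1).  For `Re μ < 0`, `t ≥ 0` and `f` the
truncated exponential `f(x) = e^{μx}` for `x > t`, `f(x) = 0` for `0 < x < t`, one has
`⟨Θf, f⟩ = B(-conj μ)·‖f‖²` (inner product linear in the first argument, i.e.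
`⟨u,v⟩ = ∫ u·conj v`) and `‖f‖² = e^{2t·Re μ}/(-2 Re μ)`. -/
theorem stmt_3 {ι : Type*} [Countable ι] (l : ι → ℂ)
    (h1 : ∀ k, (l k).re < 0)
    (h2 : Summable fun k => |(l k).re|)
    (h3 : ∃ R > (0:ℝ), ∀ k, |(l k).im| < R)
    (Θ : Kspace →L[ℂ] Kspace)
    (hΘiso : ∀ f : Kspace, ‖Θ f‖ = ‖f‖)
    (hΘ : ∀ (f : Kspace) (z : ℂ), 0 < z.re →
      Laplace (Θ f) z = (∏' k, (z + (starRingEnd ℂ) (l k)) / (z - l k)) * Laplace f z)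
    (μ : ℂ) (hμ : μ.re < 0) (t : ℝ) (ht : 0 ≤ t)
    (f : Kspace)
    (hf : (f : ℝ → ℂ) =ᵐ[mu0] fun x => if t < x then Complex.exp (μ * x) else 0) :
    ⟪f, Θ f⟫ =
      (∏' k, ((-(starRingEnd ℂ) μ) + (starRingEnd ℂ) (l k)) / ((-(starRingEnd ℂ) μ) - l k)) *
        (‖f‖ : ℂ) ^ 2 ∧
    ‖f‖ ^ 2 = Real.exp (2 * t * μ.re) / (-2 * μ.re) := by
  classical
  set P : ℂ → ℂ := fun z => ∏' k, (z + (starRingEnd ℂ) (l k)) / (z - l k) with hPdef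
  have hPz : ∀ z : ℂ, (∏' k, (z + (starRingEnd ℂ) (l k)) / (z - l k)) = P z := fun z => rfl
  set w : ℂ := μ + (starRingEnd ℂ) μ with hw
  have hww : w = ((2*μ.re : ℝ) : ℂ) := by rw [hw, Complex.add_conj]
  have hwre : w.re < 0 := by
    rw [hww, Complex.ofReal_re]; linarith
  -- f₀ : the exponential  e^{μ t} e^{μ x}
  have hmem0 : MemLp (fun x : ℝ => Complex.exp (μ * t) * Complex.exp (μ * x)) 2 mu0 :=
    (memL2_cexp hμ).const_mul _
  set f0 : Kspace := hmem0.toLp _ with hf0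
  have hf0coe : (f0 : ℝ → ℂ) =ᵐ[mu0]
      fun x => Complex.exp (μ * t) * Complex.exp (μ * x) := hmem0.coeFn_toLp
  -- Laplace of f₀
  have hLf0 : ∀ z : ℂ, 0 < z.re → Laplace f0 z = Complex.exp (μ * t) * (-1 / (μ - z)) := by
    intro z hz
    have hmz : (μ - z).re < 0 := by rw [Complex.sub_re]; linarith
    have e1 : ∫ x, Complex.exp (-z * x) * (f0 : ℝ → ℂ) x ∂mu0
        = ∫ x, Complex.exp (μ*t) * Complex.exp ((μ - z) * x) ∂mu0 := by
      apply integral_congr_ae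
      filter_upwards [hf0coe] with x hx
      rw [hx, show Complex.exp (-z*(x:ℂ)) * (Complex.exp (μ*t) * Complex.exp (μ*(x:ℂ)))
        = Complex.exp (μ*t) * (Complex.exp (μ*(x:ℂ)) * Complex.exp (-z*(x:ℂ))) from by ring,
        ← Complex.exp_add]
      congr 2
      ring
    rw [Laplace, e1, integral_const_mul]
    congr 1
    rw [show (∫ x, Complex.exp ((μ - z) * x) ∂mu0)
      = ∫ x in Set.Ioi (0:ℝ), Complex.exp ((μ-z)*x) from rfl, integral_cexp_Ioi hmz 0]
    norm_num
  -- Laplace of f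
  have hLf : ∀ z : ℂ, 0 < z.re → Laplace f z = Complex.exp (-z * t) * Laplace f0 z := by
    intro z hz
    have hmz : (μ - z).re < 0 := by rw [Complex.sub_re]; linarith
    have e1 : ∫ x, Complex.exp (-z*x) * (f : ℝ → ℂ) x ∂mu0
        = ∫ x, (Set.Ioi t).indicator (fun x : ℝ => Complex.exp ((μ - z) * x)) x ∂mu0 := by
      apply integral_congr_ae
      filter_upwards [hf] with x hx
      rw [hx]
      by_cases hxt : t < x
      · rw [if_pos hxt, Set.indicator_of_mem (Set.mem_Ioi.mpr hxt), ← Complex.exp_add]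
        congr 1
        ring
      · rw [if_neg hxt, mul_zero, Set.indicator_of_notMem (by simpa using hxt)]
    rw [Laplace, e1, int_ind t ht, integral_cexp_Ioi hmz t, hLf0 z hz,
      show Complex.exp (-z*(t:ℂ)) * (Complex.exp (μ*t) * (-1/(μ-z)))
        = Complex.exp (-z*(t:ℂ)) * Complex.exp (μ*(t:ℂ)) * (-1/(μ-z)) from by ring,
      ← Complex.exp_add, show -z*(t:ℂ) + μ*(t:ℂ) = (μ - z)*(t:ℂ) from by ring]
    ring
  -- h₀ = Θ f₀ and its shift G
  set h0 : ℝ → ℂ := ((Θ f0 : Kspace) : ℝ → ℂ) with hh0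
  have h0sm : StronglyMeasurable h0 := Lp.stronglyMeasurable _
  have h0mem : MemLp h0 2 mu0 := Lp.memLp _
  set G : ℝ → ℂ := (Set.Ioi t).indicator (fun x => h0 (x - t)) with hGdef
  have hGsm : AEStronglyMeasurable G mu0 :=
    ((h0sm.comp_measurable (measurable_id.sub_const t)).indicator
      measurableSet_Ioi).aestronglyMeasurable
  have htrans : ∀ φ : ℝ → ℂ,
      ∫ x, (Set.Ioi t).indicator (fun x => φ x * h0 (x - t)) x ∂mu0
        = ∫ y, φ (y + t) * h0 y ∂mu0 := by
    intro φ
    rw [int_ind t ht, ← int_trans t ht (fun y => φ (y + t) * h0 y)]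
    congr 1
    funext x
    rw [sub_add_cancel]
  have hGmem : MemLp G 2 mu0 := by
    rw [memLp_two_iff_integrable_sq_norm hGsm]
    have h0sq : Integrable (fun y => ‖h0 y‖^2) mu0 :=
      (memLp_two_iff_integrable_sq_norm h0mem.aestronglyMeasurable).mp h0mem
    have e1 : (fun x => ‖G x‖^2) = (Set.Ioi t).indicator (fun x => ‖h0 (x - t)‖^2) := by
      funext x
      by_cases hxt : x ∈ Set.Ioi t
      · rw [hGdef, Set.indicator_of_mem hxt, Set.indicator_of_mem hxt]
      · rw [hGdef, Set.indicator_of_notMem hxt, Set.indicator_of_notMem hxt]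
        simp
    rw [e1, integrable_indicator_iff measurableSet_Ioi]
    show Integrable _ (mu0.restrict (Set.Ioi t))
    rw [mu0, Measure.restrict_restrict measurableSet_Ioi, Set.Ioi_inter_Ioi, max_eq_left ht]
    have := ((mp_sub t ht).integrable_comp_emb (emb_sub t)
      (g := fun y => ‖h0 y‖^2)).mpr h0sq
    exact this
  have hGlap : ∀ v : ℂ, ∫ x : ℝ, Complex.exp (v * x) * G x ∂mu0
      = Complex.exp (v * t) * ∫ y : ℝ, Complex.exp (v * y) * h0 y ∂mu0 := by
    intro v
    have e1 : (fun x : ℝ => Complex.exp (v * x) * G x)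
        = (Set.Ioi t).indicator (fun x => Complex.exp (v*x) * h0 (x - t)) := by
      funext x
      by_cases hxt : x ∈ Set.Ioi t
      · rw [hGdef, Set.indicator_of_mem hxt, Set.indicator_of_mem hxt]
      · rw [hGdef, Set.indicator_of_notMem hxt, Set.indicator_of_notMem hxt, mul_zero]
    rw [e1, htrans, ← integral_const_mul]
    congr 1
    funext y
    rw [← mul_assoc, ← Complex.exp_add]
    congr 2
    push_cast
    ring
  -- the Laplace transforms of Θ f and G agree, hence Θ f = G a.e.
  have hae : ((Θ f : Kspace) : ℝ → ℂ) =ᵐ[mu0] G := by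
    have hdmem : MemLp (fun x : ℝ => ((Θ f : Kspace) : ℝ → ℂ) x - G x) 2 mu0 :=
      (Lp.memLp _).sub hGmem
    have hLd : ∀ s : ℝ, 1 ≤ s →
        ∫ x : ℝ, Complex.exp (-(s:ℂ) * x) * (((Θ f : Kspace) : ℝ → ℂ) x - G x) ∂mu0 = 0 := by
      intro s hs
      have hsre : (-(s:ℂ)).re < 0 := by
        simp only [Complex.neg_re, Complex.ofReal_re]; linarith
      have hzre : (0:ℝ) < ((s:ℂ)).re := by simp only [Complex.ofReal_re]; linarith
      have hint1 : Integrable (fun x : ℝ => Complex.exp (-(s:ℂ)*x) * ((Θ f : Kspace) : ℝ → ℂ) x) mu0 :=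
        integrable_mul_L2 (memL2_cexp hsre) (Lp.memLp _)
      have hint2 : Integrable (fun x : ℝ => Complex.exp (-(s:ℂ)*x) * G x) mu0 :=
        integrable_mul_L2 (memL2_cexp hsre) hGmem
      have esplit : ∫ x : ℝ, Complex.exp (-(s:ℂ) * x) * (((Θ f : Kspace) : ℝ → ℂ) x - G x) ∂mu0
          = (∫ x : ℝ, Complex.exp (-(s:ℂ)*x) * ((Θ f : Kspace) : ℝ → ℂ) x ∂mu0)
            - ∫ x : ℝ, Complex.exp (-(s:ℂ)*x) * G x ∂mu0 := by
        rw [← integral_sub hint1 hint2]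
        congr 1
        funext x
        ring
      rw [esplit]
      have hA : (∫ x : ℝ, Complex.exp (-(s:ℂ)*x) * ((Θ f : Kspace) : ℝ → ℂ) x ∂mu0)
          = Laplace (Θ f) (s:ℂ) := rfl
      have hB : ∫ x : ℝ, Complex.exp (-(s:ℂ)*x) * G x ∂mu0
          = Complex.exp (-(s:ℂ)*t) * Laplace (Θ f0) (s:ℂ) := by
        have := hGlap (-(s:ℂ))
        rw [this]
        rfl
      rw [hA, hB, hΘ f _ hzre, hΘ f0 _ hzre, hLf _ hzre]
      ring
    have hd0 := laplace_inj hdmem hLd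
    filter_upwards [hd0] with x hx
    exact sub_eq_zero.mp hx
  -- the inner product ⟪f, f⟫
  have hFF : (⟪f, f⟫ : ℂ) = -Complex.exp (w * t)/w := by
    rw [L2.inner_def]
    have e1 : ∫ x, (inner ℂ (f x) (f x) : ℂ) ∂mu0
        = ∫ x, (Set.Ioi t).indicator (fun x : ℝ => Complex.exp (w * x)) x ∂mu0 := by
      apply integral_congr_ae
      filter_upwards [hf] with x hx
      rw [RCLike.inner_apply, hx]
      by_cases hxt : t < x
      · rw [if_pos hxt, Set.indicator_of_mem (Set.mem_Ioi.mpr hxt), ← Complex.exp_conj,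
          ← Complex.exp_add]
        congr 1
        rw [hw]
        push_cast [map_mul, Complex.conj_ofReal]
        ring
      · rw [if_neg hxt, map_zero, zero_mul, Set.indicator_of_notMem (by simpa using hxt)]
    rw [e1, int_ind t ht, integral_cexp_Ioi hwre t]
  -- the inner product ⟪f, Θ f⟫
  have hconjre : 0 < (-(starRingEnd ℂ) μ).re := by
    rw [Complex.neg_re, Complex.conj_re]; linarith
  have hTh : (⟪f, Θ f⟫ : ℂ) = P (-(starRingEnd ℂ) μ) * ⟪f, f⟫ := by
    rw [L2.inner_def]
    have e1 : ∫ x, (inner ℂ (f x) ((Θ f : Kspace) x) : ℂ) ∂mu0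
        = ∫ x : ℝ, Complex.exp ((starRingEnd ℂ) μ * x) * G x ∂mu0 := by
      apply integral_congr_ae
      filter_upwards [hf, hae] with x hx hx2
      rw [RCLike.inner_apply', hx, hx2]
      by_cases hxt : t < x
      · rw [if_pos hxt, ← Complex.exp_conj]
        congr 2
        push_cast [map_mul, Complex.conj_ofReal]
        ring
      · rw [if_neg hxt, map_zero, zero_mul,
          hGdef, Set.indicator_of_notMem (by simpa using hxt), mul_zero]
    rw [e1, hGlap]
    have hLint : ∫ y : ℝ, Complex.exp ((starRingEnd ℂ) μ * y) * h0 y ∂mu0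
        = Laplace (Θ f0) (-(starRingEnd ℂ) μ) := by
      rw [Laplace]
      congr 1
      funext y
      rw [neg_neg]
    rw [hLint, hΘ f0 _ hconjre, hLf0 _ hconjre, hFF]
    rw [show μ - -(starRingEnd ℂ) μ = w from by rw [hw]; ring]
    rw [show Complex.exp ((starRingEnd ℂ) μ * t) *
        (P (-(starRingEnd ℂ) μ) * (Complex.exp (μ * t) * (-1 / w)))
      = P (-(starRingEnd ℂ) μ) * (Complex.exp ((starRingEnd ℂ) μ * (t:ℂ)) *
          Complex.exp (μ * (t:ℂ)) * (-1 / w)) from by ring, ← Complex.exp_add]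
    rw [show (starRingEnd ℂ) μ * (t:ℂ) + μ * (t:ℂ) = w * (t:ℂ) from by rw [hw]; ring]
    ring
  constructor
  · rw [hTh, hPz]
    congr 1
    exact inner_self_eq_norm_sq_to_K f
  · have hcsq : ((‖f‖ : ℂ))^2 = -Complex.exp (w * t)/w := by
      rw [← hFF]
      exact (inner_self_eq_norm_sq_to_K f).symm
    have h2 : (-Complex.exp (w*t)/w : ℂ) = ((Real.exp (2*t*μ.re) / (-2*μ.re) : ℝ) : ℂ) := by
      rw [hww, show ((2*μ.re:ℝ):ℂ) * (t:ℂ) = ((2*t*μ.re : ℝ):ℂ) from by push_cast; ring,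
        ← Complex.ofReal_exp]
      rw [show (Real.exp (2*t*μ.re) / (-2*μ.re) : ℝ) = -Real.exp (2*t*μ.re) / (2*μ.re) from by
        ring]
      push_cast
      ring
    have h3 : ((‖f‖^2 : ℝ) : ℂ) = ((Real.exp (2*t*μ.re) / (-2*μ.re) : ℝ) : ℂ) := by
      push_cast
      rw [hcsq, h2]
      push_cast
      ring
    exact_mod_cast h3
end
end

section
/- For every t > 0 and every n, ‖P_{[t,∞)}(V_t g_n) − S_t g_n‖² ≤ 2·(1 − e^{t·Re λ_n}). -/
open MeasureTheory
open scoped InnerProductSpace ComplexConjugate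

noncomputable section

/-- The squared Hilbert–Schmidt norm of a bounded operator on an inner product space,
as the supremum over finite orthonormal families `(e_x)_{x ∈ s}` of `∑ ‖T e_x‖²`
(this equals `∑_n ‖T e_n‖²` for any orthonormal basis `(e_n)`). -/
def hsNormSq {H : Type*} [NormedAddCommGroup H] [InnerProductSpace ℂ H]
    (T : H →L[ℂ] H) : ENNReal :=
  ⨆ (s : Finset H) (_ : Orthonormal ℂ (fun x : s => (x : H))),
    ∑ x ∈ s, ENNReal.ofReal (‖T x‖ ^ 2)

/-- A bounded operator is Hilbert–Schmidt (`T ∈ s₂`) if `∑_n ‖T e_n‖² < ∞` for an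
orthonormal basis. -/
def IsHilbertSchmidt {H : Type*} [NormedAddCommGroup H] [InnerProductSpace ℂ H]
    (T : H →L[ℂ] H) : Prop := hsNormSq T < ⊤

/-- The Hilbert–Schmidt norm `‖T‖₂ = (∑_n ‖T e_n‖²)^{1/2}`. -/
def hsNorm {H : Type*} [NormedAddCommGroup H] [InnerProductSpace ℂ H]
    (T : H →L[ℂ] H) : ℝ := Real.sqrt (hsNormSq T).toReal

namespace Stmt9Aux

lemma mu0_null_iff {s : Set ℝ} : mu0 s = 0 ↔ volume (s ∩ Set.Ioi 0) = 0 := by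
  rw [mu0, Measure.restrict_apply' measurableSet_Ioi]

lemma ae_shift_add {t : ℝ} (ht : 0 ≤ t) {f h : ℝ → ℂ} (hfh : f =ᵐ[mu0] h) :
    (fun y => f (y + t)) =ᵐ[mu0] fun y => h (y + t) := by
  have h0 : volume ({x | f x ≠ h x} ∩ Set.Ioi 0) = 0 := by
    have h1 := hfh
    rw [Filter.EventuallyEq, ae_iff] at h1
    exact mu0_null_iff.mp h1
  rw [Filter.EventuallyEq, ae_iff]
  apply mu0_null_iff.mpr
  refine measure_mono_null (fun y hy => ?_) (?_ : volume ((fun x => x + t) ⁻¹' ({x | f x ≠ h x} ∩ Set.Ioi 0)) = 0)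
  · exact ⟨hy.1, add_pos_of_pos_of_nonneg hy.2 ht⟩
  · rw [measure_preimage_add_right]; exact h0

lemma indicator_shift (φ : ℝ → ℂ) (t : ℝ) :
    ∫ x in Set.Ioi t, φ (x - t) = ∫ y in Set.Ioi (0:ℝ), φ y := by
  rw [← integral_indicator measurableSet_Ioi, ← integral_indicator measurableSet_Ioi]
  have h : (Set.Ioi t).indicator (fun x => φ (x - t)) = fun x => (Set.Ioi (0:ℝ)).indicator φ (x - t) := by
    funext x
    by_cases hx : t < x
    · rw [Set.indicator_of_mem (Set.mem_Ioi.mpr hx),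
        Set.indicator_of_mem (Set.mem_Ioi.mpr (by simpa [sub_pos] using hx))]
    · rw [Set.indicator_of_notMem (fun hc => hx (Set.mem_Ioi.mp hc)),
        Set.indicator_of_notMem (fun hc => hx (by simpa [sub_pos] using Set.mem_Ioi.mp hc))]
  rw [h, integral_sub_right_eq_self ((Set.Ioi (0:ℝ)).indicator φ) t]

lemma integral_mu0_ite (t : ℝ) (ht : 0 ≤ t) (φ : ℝ → ℂ) :
    (∫ x, (if t < x then φ (x - t) else 0) ∂mu0) = ∫ y, φ y ∂mu0 := by
  have h0 : (∫ x, (if t < x then φ (x - t) else 0) ∂mu0)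
      = ∫ x in Set.Ioi (0:ℝ), (Set.Ioi t).indicator (fun x => φ (x - t)) x := by
    rw [mu0]
    apply integral_congr_ae
    filter_upwards with x
    by_cases hx : t < x <;> simp [Set.indicator, hx]
  rw [h0, setIntegral_indicator measurableSet_Ioi, Set.Ioi_inter_Ioi, max_eq_right ht,
    indicator_shift φ t]
  rw [mu0]

lemma inner_eq_integral (u v : Kspace) :
    (inner ℂ u v : ℂ) = ∫ x, conj ((u : ℝ → ℂ) x) * (v : ℝ → ℂ) x ∂mu0 := by
  rw [MeasureTheory.L2.inner_def]
  simp only [RCLike.inner_apply, mul_comm]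

lemma inner_S_right (t : ℝ) (ht : 0 ≤ t) (u v w : Kspace)
    (hw : (w : ℝ → ℂ) =ᵐ[mu0] fun x => if t < x then (v : ℝ → ℂ) (x - t) else 0) :
    (inner ℂ u w : ℂ) = ∫ y, conj ((u : ℝ → ℂ) (y + t)) * (v : ℝ → ℂ) y ∂mu0 := by
  rw [inner_eq_integral]
  have h1 : (fun x => conj ((u : ℝ → ℂ) x) * (w : ℝ → ℂ) x) =ᵐ[mu0]
      fun x => if t < x then conj ((u : ℝ → ℂ) ((x - t) + t)) * (v : ℝ → ℂ) (x - t) else 0 := by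
    filter_upwards [hw] with x hx
    rw [hx]
    by_cases h : t < x <;> simp [h]
  rw [integral_congr_ae h1]
  exact integral_mu0_ite t ht (fun y => conj ((u : ℝ → ℂ) (y + t)) * (v : ℝ → ℂ) y)

lemma inner_S_S (t : ℝ) (ht : 0 ≤ t) (u v su sv : Kspace)
    (hsu : (su : ℝ → ℂ) =ᵐ[mu0] fun x => if t < x then (u : ℝ → ℂ) (x - t) else 0)
    (hsv : (sv : ℝ → ℂ) =ᵐ[mu0] fun x => if t < x then (v : ℝ → ℂ) (x - t) else 0) :
    (inner ℂ su sv : ℂ) = (inner ℂ u v : ℂ) := by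
  rw [inner_eq_integral, inner_eq_integral]
  have h1 : (fun x => conj ((su : ℝ → ℂ) x) * (sv : ℝ → ℂ) x) =ᵐ[mu0]
      fun x => if t < x then conj ((u : ℝ → ℂ) (x - t)) * (v : ℝ → ℂ) (x - t) else 0 := by
    filter_upwards [hsu, hsv] with x h1 h2
    rw [h1, h2]
    by_cases h : t < x <;> simp [h]
  rw [integral_congr_ae h1]
  exact integral_mu0_ite t ht (fun y => conj ((u : ℝ → ℂ) y) * (v : ℝ → ℂ) y)

lemma norm_Pinf_le (t : ℝ) (u pu : Kspace)
    (hpu : (pu : ℝ → ℂ) =ᵐ[mu0] fun x => if t ≤ x then (u : ℝ → ℂ) x else 0) :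
    ‖pu‖ ≤ ‖u‖ := by
  rw [Lp.norm_def, Lp.norm_def]
  apply ENNReal.toReal_mono (Lp.eLpNorm_ne_top u)
  apply eLpNorm_mono_ae
  filter_upwards [hpu] with x hx
  rw [hx]
  split <;> simp

lemma inner_P_S (t : ℝ) (u v pu sv : Kspace)
    (hpu : (pu : ℝ → ℂ) =ᵐ[mu0] fun x => if t ≤ x then (u : ℝ → ℂ) x else 0)
    (hsv : (sv : ℝ → ℂ) =ᵐ[mu0] fun x => if t < x then (v : ℝ → ℂ) (x - t) else 0) :
    (inner ℂ pu sv : ℂ) = (inner ℂ u sv : ℂ) := by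
  rw [inner_eq_integral, inner_eq_integral]
  apply integral_congr_ae
  filter_upwards [hpu, hsv] with x h1 h2
  rw [h1, h2]
  by_cases h : t < x
  · rw [if_pos h.le]
  · simp [h]

lemma coeFn_finset_sum {α : Type*} (s : Finset α) (f : α → Kspace) :
    ⇑(∑ k ∈ s, f k) =ᵐ[mu0] fun x => ∑ k ∈ s, (f k : ℝ → ℂ) x := by
  classical
  induction s using Finset.induction_on with
  | empty => simp only [Finset.sum_empty]; exact Lp.coeFn_zero ℂ 2 mu0
  | @insert a s ha ih =>
    rw [Finset.sum_insert ha]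
    filter_upwards [Lp.coeFn_add (f a) (∑ k ∈ s, f k), ih] with x h1 h2
    rw [h1]
    simp only [Pi.add_apply, Finset.sum_insert ha, h2]

end Stmt9Aux

open Stmt9Aux InnerProductSpace in
/-- in the construction of the theorem (pairwise distinct `λ_n`
satisfying condition (1), `f_n(x) = (-2 Re λ_n)^{1/2} e^{λ_n x}`, `g_n` their
Gram–Schmidt orthonormalization, `K₀ = (span{f_n})^⊥`, `V_t h = S_t h` on `K₀`,
`V_t g_n = e^{-i t Im λ_n} g_n`): for every `t > 0` and every `n`,
`‖P_{[t,∞)}(V_t g_n) - S_t g_n‖² ≤ 2·(1 - e^{t·Re λ_n})`. -/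
theorem stmt_9 {ι : Type*} [LinearOrder ι] [LocallyFiniteOrderBot ι] [WellFoundedLT ι]
    [Countable ι] (l : ι → ℂ)
    (h1 : ∀ n, (l n).re < 0)
    (h2 : Summable fun n => |(l n).re|)
    (h3 : ∃ R > (0:ℝ), ∀ n, |(l n).im| < R)
    (hdist : Function.Injective l)
    (F : ι → Kspace)
    (hF : ∀ n, (F n : ℝ → ℂ) =ᵐ[mu0]
      fun x => (Real.sqrt (-2 * (l n).re) : ℂ) * Complex.exp (l n * x))
    (S : ℝ → Kspace →L[ℂ] Kspace)
    (hS : ∀ t ≥ (0:ℝ), ∀ f : Kspace,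
      (S t f : ℝ → ℂ) =ᵐ[mu0] fun x => if t < x then f (x - t) else 0)
    (Pinf : ℝ → Kspace →L[ℂ] Kspace)
    (hPinf : ∀ (t : ℝ) (f : Kspace),
      (Pinf t f : ℝ → ℂ) =ᵐ[mu0] fun x => if t ≤ x then f x else 0)
    (V : ℝ → Kspace →L[ℂ] Kspace)
    (hV₀ : ∀ t ≥ (0:ℝ), ∀ h ∈ (Submodule.span ℂ (Set.range F))ᗮ, V t h = S t h)
    (hVg : ∀ t ≥ (0:ℝ), ∀ n, V t (InnerProductSpace.gramSchmidtNormed ℂ F n) =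
      Complex.exp (-Complex.I * t * (l n).im) • InnerProductSpace.gramSchmidtNormed ℂ F n) :
    ∀ t > (0:ℝ), ∀ n,
      ‖Pinf t (V t (InnerProductSpace.gramSchmidtNormed ℂ F n)) - S t (InnerProductSpace.gramSchmidtNormed ℂ F n)‖ ^ 2
        ≤ 2 * (1 - Real.exp (t * (l n).re)) := by
  intro t ht n
  have hexp1 : Real.exp (t * (l n).re) ≤ 1 :=
    Real.exp_le_one_iff.mpr (mul_nonpos_of_nonneg_of_nonpos ht.le (h1 n).le)
  set g : Kspace := gramSchmidtNormed ℂ F n with hgdef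
  by_cases hg0 : g = 0
  · rw [hg0]
    simp only [map_zero, sub_zero, norm_zero]
    nlinarith
  have hgn : ‖g‖ = 1 := gramSchmidtNormed_unit_length' hg0
  -- the scalar for V
  set a : ℂ := Complex.exp (-Complex.I * t * (l n).im) with hadef
  have hVgt : V t g = a • g := hVg t ht.le n
  -- representation of g as a finite combination of the F k, k ≤ n
  have hspan : g ∈ Submodule.span ℂ (F '' Set.Iic n) := by
    rw [hgdef, gramSchmidtNormed]
    exact Submodule.smul_mem _ _ (gramSchmidt_mem_span ℂ F le_rfl)
  obtain ⟨c, hc_supp, hc⟩ := (Finsupp.mem_span_image_iff_linearCombination ℂ).mp hspan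
  have hc_supp' : (c.support : Set ι) ⊆ Set.Iic n := Finsupp.mem_supported ℂ c |>.mp hc_supp
  have hg_sum : (∑ k ∈ c.support, c k • F k) = g := by
    rw [← hc, Finsupp.linearCombination_apply, Finsupp.sum]
  -- orthogonality: ⟪F k, g⟫ = 0 for k < n
  have horthog : ∀ k, k < n → (inner ℂ (F k) g : ℂ) = 0 := by
    intro k hk
    have hFk : F k ∈ Submodule.span ℂ (gramSchmidt ℂ F '' Set.Iic k) :=
      mem_span_gramSchmidt ℂ F le_rfl
    have hle : Submodule.span ℂ (gramSchmidt ℂ F '' Set.Iic k) ≤ (Submodule.span ℂ {g})ᗮ := by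
      rw [Submodule.span_le]
      rintro - ⟨j, hj, rfl⟩
      rw [SetLike.mem_coe, Submodule.mem_orthogonal']
      intro u hu
      obtain ⟨b, rfl⟩ := Submodule.mem_span_singleton.mp hu
      rw [inner_smul_right, hgdef, gramSchmidtNormed, inner_smul_right,
        gramSchmidt_orthogonal ℂ F (((Set.mem_Iic.mp hj).trans_lt hk).ne)]
      simp
    have := Submodule.mem_orthogonal' _ (F k) |>.mp (hle hFk) g
      (Submodule.mem_span_singleton_self g)
    exact this
  have hinner_self : (inner ℂ g g : ℂ) = 1 := by
    rw [inner_self_eq_norm_sq_to_K, hgn]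
    norm_num
  -- key computation : ⟪g, S t g⟫ = conj (exp (l n * t))
  have key1 : (inner ℂ g (S t g) : ℂ) = conj (Complex.exp (l n * t)) := by
    rw [inner_S_right t ht.le g g (S t g) (hS t ht.le g)]
    have hgG : (g : ℝ → ℂ) =ᵐ[mu0] fun x =>
        ∑ k ∈ c.support, c k * ((Real.sqrt (-2 * (l k).re) : ℂ) * Complex.exp (l k * x)) := by
      have h1 := coeFn_finset_sum c.support (fun k => c k • F k)
      rw [hg_sum] at h1
      refine h1.trans ?_
      have h2 : ∀ᵐ x ∂mu0, ∀ k ∈ c.support,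
          ((c k • F k : Kspace) : ℝ → ℂ) x
            = c k * ((Real.sqrt (-2 * (l k).re) : ℂ) * Complex.exp (l k * x)) := by
        rw [Filter.eventually_all_finset]
        intro k _
        filter_upwards [Lp.coeFn_smul (c k) (F k), hF k] with x hx1 hx2
        rw [hx1, Pi.smul_apply, hx2, smul_eq_mul]
      filter_upwards [h2] with x hx
      exact Finset.sum_congr rfl hx
    have hGshift := ae_shift_add ht.le hgG
    have hint : (fun y => conj ((g : ℝ → ℂ) (y + t)) * (g : ℝ → ℂ) y) =ᵐ[mu0]
        fun y => ∑ k ∈ c.support, conj (c k * Complex.exp (l k * t)) *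
          (conj ((Real.sqrt (-2 * (l k).re) : ℂ) * Complex.exp (l k * y)) * (g : ℝ → ℂ) y) := by
      filter_upwards [hGshift] with y hy
      rw [hy, map_sum, Finset.sum_mul]
      refine Finset.sum_congr rfl fun k _ => ?_
      rw [show ((y + t : ℝ) : ℂ) = (y : ℂ) + (t : ℂ) by push_cast; ring,
        show l k * ((y : ℂ) + (t : ℂ)) = l k * t + l k * y by ring, Complex.exp_add]
      simp only [map_mul]
      ring
    rw [integral_congr_ae hint, integral_finset_sum]
    · have hterm : ∀ k ∈ c.support,
          (∫ y, conj (c k * Complex.exp (l k * t)) *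
            (conj ((Real.sqrt (-2 * (l k).re) : ℂ) * Complex.exp (l k * y)) * (g : ℝ → ℂ) y) ∂mu0)
          = conj (c k * Complex.exp (l k * t)) * (inner ℂ (F k) g : ℂ) := by
        intro k _
        rw [integral_const_mul]
        congr 1
        rw [inner_eq_integral]
        apply (integral_congr_ae ?_).symm
        filter_upwards [hF k] with y hy
        rw [hy]
      rw [Finset.sum_congr rfl hterm]
      have hgg : (1 : ℂ) = ∑ k ∈ c.support, conj (c k) * (inner ℂ (F k) g : ℂ) := by
        rw [← hinner_self]
        conv_lhs => rw [← hg_sum]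
        rw [sum_inner]
        simp_rw [inner_smul_left]
        rw [hg_sum]
      have : ∑ k ∈ c.support, conj (c k * Complex.exp (l k * t)) * (inner ℂ (F k) g : ℂ)
          = conj (Complex.exp (l n * t)) * ∑ k ∈ c.support, conj (c k) * (inner ℂ (F k) g : ℂ) := by
        rw [Finset.mul_sum]
        refine Finset.sum_congr rfl fun k hk => ?_
        by_cases hkn : k = n
        · subst hkn; rw [map_mul]; ring
        · rw [horthog k (lt_of_le_of_ne (hc_supp' hk) hkn)]
          ring
      rw [this, ← hgg, mul_one]
    · intro k _
      apply Integrable.const_mul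
      have hInt : Integrable (fun y => (inner ℂ ((F k : ℝ → ℂ) y) ((g : ℝ → ℂ) y) : ℂ)) mu0 :=
        L2.integrable_inner (𝕜 := ℂ) (F k) g
      apply hInt.congr
      filter_upwards [hF k] with y hy
      rw [RCLike.inner_apply, hy, mul_comm]
  -- cross term
  have key3 : (inner ℂ (Pinf t (V t g)) (S t g) : ℂ) = (Real.exp (t * (l n).re) : ℂ) := by
    rw [inner_P_S t (V t g) g (Pinf t (V t g)) (S t g) (hPinf t (V t g)) (hS t ht.le g),
      hVgt, inner_smul_left, key1, hadef, ← Complex.exp_conj, ← Complex.exp_conj,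
      ← Complex.exp_add, Complex.ofReal_exp]
    congr 1
    simp only [map_mul, map_neg, Complex.conj_I, Complex.conj_ofReal]
    rw [show (starRingEnd ℂ) (l n) = (l n).re - (l n).im * Complex.I by
      simp [Complex.ext_iff]]
    push_cast
    ring
  -- norms
  have hVn : ‖V t g‖ = 1 := by
    rw [hVgt, norm_smul, hgn, mul_one, hadef, Complex.norm_exp]
    norm_num
  have hPV : ‖Pinf t (V t g)‖ ≤ 1 := by
    have := norm_Pinf_le t (V t g) (Pinf t (V t g)) (hPinf t (V t g))
    rw [hVn] at this
    exact this
  have hSg1 : ‖S t g‖ = 1 := by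
    have h2 : (inner ℂ (S t g) (S t g) : ℂ) = (inner ℂ g g : ℂ) :=
      inner_S_S t ht.le g g _ _ (hS t ht.le g) (hS t ht.le g)
    have h4 : ‖S t g‖ ^ 2 = ‖g‖ ^ 2 := by
      have h3 := congrArg (RCLike.re (K := ℂ)) h2
      rwa [inner_self_eq_norm_sq, inner_self_eq_norm_sq] at h3
    rw [hgn] at h4
    have := (pow_left_inj₀ (norm_nonneg (S t g)) zero_le_one (two_ne_zero)).mp (by simpa using h4)
    exact this
  have hre : RCLike.re (inner ℂ (Pinf t (V t g)) (S t g) : ℂ) = Real.exp (t * (l n).re) := by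
    rw [key3, RCLike.re_to_complex, Complex.ofReal_re]
  have hns := @norm_sub_sq ℂ _ _ _ _ (Pinf t (V t g)) (S t g)
  rw [hns, hre, hSg1]
  have hPVsq : ‖Pinf t (V t g)‖ ^ 2 ≤ 1 := by nlinarith [norm_nonneg (Pinf t (V t g))]
  nlinarith
end
end

section
/- For every unit vector g ∈ K and every t > 0, ‖P_{[0,t]} g‖² ≤ 1 − |⟨S_t^* g, g⟩|². In particular, for the vectors g_n of the construction, ‖P_{[0,t]} g_n‖² ≤ 1 − e^{2t·Re λ_n}. -/
open MeasureTheory ComplexInnerProductSpace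

noncomputable section

lemma inner_K (f g : Kspace) :
    ⟪f, g⟫ = ∫ x, (starRingEnd ℂ) (f x) * g x ∂mu0 := by
  rw [MeasureTheory.L2.inner_def]
  exact integral_congr_ae (Filter.Eventually.of_forall fun x => by simp [RCLike.inner_apply]; ring)

lemma shift_integral {t : ℝ} (ht : 0 < t) (φ : ℝ → ℂ) :
    ∫ x, (if t < x then φ (x - t) else 0) ∂mu0 = ∫ x, φ x ∂mu0 := by
  rw [mu0, ← integral_indicator measurableSet_Ioi, ← integral_indicator measurableSet_Ioi]
  have h : (Set.Ioi (0:ℝ)).indicator (fun x => if t < x then φ (x - t) else 0)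
      = fun x => (Set.Ioi (0:ℝ)).indicator φ (x - t) := by
    funext x
    simp only [Set.indicator, Set.mem_Ioi, sub_pos]
    by_cases h1 : t < x
    · simp [h1, lt_trans ht h1]
    · simp [h1]
  rw [h, integral_sub_right_eq_self]

lemma part1 (S : Kspace →L[ℂ] Kspace) {t : ℝ} (ht : 0 < t)
    (hS : (∀ f : Kspace, (S f : ℝ → ℂ) =ᵐ[mu0] fun x => if t < x then f (x - t) else 0))
    (Pr : Kspace →L[ℂ] Kspace)
    (hP : ∀ f : Kspace, (Pr f : ℝ → ℂ) =ᵐ[mu0] fun x => if x ∈ Set.Icc 0 t then f x else 0)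
    (g : Kspace) (hg : ‖g‖ = 1) :
    ‖Pr g‖ ^ 2 ≤ 1 - ‖⟪g, ContinuousLinearMap.adjoint S g⟫‖ ^ 2 := by
  set Q := g - Pr g with hQdef
  have hQc : (Q : ℝ → ℂ) =ᵐ[mu0] fun x => if x ∈ Set.Icc 0 t then 0 else g x := by
    filter_upwards [Lp.coeFn_sub g (Pr g), hP g] with x h1 h2
    simp only [hQdef, h1, Pi.sub_apply, h2]
    by_cases hx : x ∈ Set.Icc 0 t <;> simp [hx]
  have hPQ : ⟪Pr g, Q⟫ = 0 := by
    rw [inner_K, integral_congr_ae (g := fun _ => (0:ℂ))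
      (by filter_upwards [hP g, hQc] with x h1 h2
          by_cases hx : x ∈ Set.Icc 0 t <;> simp [h1, h2, hx]), integral_zero]
  have hsplit : ‖Pr g‖ ^ 2 + ‖Q‖ ^ 2 = 1 := by
    have hgeq : Pr g + Q = g := by rw [hQdef]; abel
    have := norm_add_sq (𝕜 := ℂ) (Pr g) Q
    rw [hgeq, hg, hPQ] at this
    simp at this
    linarith
  have hSP : ⟪S g, Q⟫ = ⟪S g, g⟫ := by
    have h0 : ⟪S g, Pr g⟫ = 0 := by
      rw [inner_K, integral_congr_ae (g := fun _ => (0:ℂ))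
        (by filter_upwards [hS g, hP g] with x h1 h2
            by_cases hx : x ∈ Set.Icc 0 t
            · simp [h1, h2, hx, not_lt.2 hx.2]
            · simp [h1, h2, hx]), integral_zero]
    rw [hQdef, inner_sub_right, h0, sub_zero]
  have hSnorm : ‖S g‖ = ‖g‖ := by
    have hin : ⟪S g, S g⟫ = ⟪g, g⟫ := by
      rw [inner_K, inner_K, ← shift_integral ht (fun y => (starRingEnd ℂ) (g y) * g y)]
      refine integral_congr_ae ?_
      filter_upwards [hS g] with x h1
      by_cases hx : t < x <;> simp [h1, hx]
    rw [inner_self_eq_norm_sq_to_K, inner_self_eq_norm_sq_to_K] at hin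
    have h2 : (‖S g‖ : ℝ) ^ 2 = ‖g‖ ^ 2 := by exact_mod_cast hin
    nlinarith [norm_nonneg (S g), norm_nonneg g]
  have hadj : ⟪g, ContinuousLinearMap.adjoint S g⟫ = ⟪S g, g⟫ :=
    ContinuousLinearMap.adjoint_inner_right S g g
  have hbound : ‖⟪S g, g⟫‖ ≤ ‖Q‖ := by
    rw [← hSP]
    calc ‖⟪S g, Q⟫‖ ≤ ‖S g‖ * ‖Q‖ := norm_inner_le_norm _ _
    _ = ‖Q‖ := by rw [hSnorm, hg, one_mul]
  rw [hadj]
  nlinarith [norm_nonneg ⟪S g, g⟫, norm_nonneg Q]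

lemma eigen {t : ℝ} (ht : 0 < t) (S : Kspace →L[ℂ] Kspace)
    (hS : ∀ f : Kspace, (S f : ℝ → ℂ) =ᵐ[mu0] fun x => if t < x then f (x - t) else 0)
    (Fn : Kspace) (c lam : ℂ)
    (hFn : (Fn : ℝ → ℂ) =ᵐ[mu0] fun x => c * Complex.exp (lam * x))
    (h : Kspace) :
    ⟪S h, Fn⟫ = Complex.exp (lam * t) * ⟪h, Fn⟫ := by
  rw [inner_K, inner_K]
  calc ∫ x, (starRingEnd ℂ) (S h x) * Fn x ∂mu0
      = ∫ x, (if t < x then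
          (fun y : ℝ => (starRingEnd ℂ) (h y) * (c * Complex.exp (lam * ((y : ℂ) + (t : ℂ))))) (x - t)
          else 0) ∂mu0 := by
        refine integral_congr_ae ?_
        filter_upwards [hS h, hFn] with x h1 h2
        rw [h1, h2]
        by_cases hx : t < x
        · simp only [hx, if_pos]
          have hc : ((x - t : ℝ) : ℂ) + (t : ℂ) = (x : ℂ) := by push_cast; ring
          rw [hc]
        · simp [hx]
    _ = ∫ y, (starRingEnd ℂ) (h y) * (c * Complex.exp (lam * ((y : ℂ) + (t : ℂ)))) ∂mu0 :=
        by exact shift_integral ht (fun y : ℝ => (starRingEnd ℂ) (h y) * (c * Complex.exp (lam * ((y : ℂ) + (t : ℂ)))))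
    _ = Complex.exp (lam * t) * ∫ y, (starRingEnd ℂ) (h y) * Fn y ∂mu0 := by
        rw [← MeasureTheory.integral_const_mul]
        refine integral_congr_ae ?_
        filter_upwards [hFn] with y h2
        rw [h2, mul_add, Complex.exp_add]
        ring



/-- for every unit vector `g ∈ K = L²(0,∞)` and every `t > 0`,
`‖P_{[0,t]} g‖² ≤ 1 - |⟨S_t^* g, g⟩|²`; in particular, for the Gram–Schmidt vectors
`g_n` of the construction, `‖P_{[0,t]} g_n‖² ≤ 1 - e^{2t·Re λ_n}`. -/
theorem stmt_10 {ι : Type*} [LinearOrder ι] [LocallyFiniteOrderBot ι] [WellFoundedLT ι]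
    [Countable ι] (l : ι → ℂ)
    (h1 : ∀ n, (l n).re < 0)
    (h2 : Summable fun n => |(l n).re|)
    (h3 : ∃ R > (0:ℝ), ∀ n, |(l n).im| < R)
    (hdist : Function.Injective l)
    -- `F n` is the unit vector `f_n(x) = (-2 Re λ_n)^{1/2} e^{λ_n x}` in `K`:
    (F : ι → Kspace)
    (hF : ∀ n, (F n : ℝ → ℂ) =ᵐ[mu0]
      fun x => (Real.sqrt (-2 * (l n).re) : ℂ) * Complex.exp (l n * x))
    -- the right-shift semigroup `S` on `K`:
    (S : ℝ → Kspace →L[ℂ] Kspace)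
    (hS : ∀ t ≥ (0:ℝ), ∀ f : Kspace,
      (S t f : ℝ → ℂ) =ᵐ[mu0] fun x => if t < x then f (x - t) else 0)
    -- the projections `P_{[a,b]}`:
    (P : ℝ → ℝ → Kspace →L[ℂ] Kspace)
    (hP : ∀ (a b : ℝ) (f : Kspace),
      (P a b f : ℝ → ℂ) =ᵐ[mu0] fun x => if x ∈ Set.Icc a b then f x else 0) :
    (∀ g : Kspace, ‖g‖ = 1 → ∀ t > (0:ℝ),
      ‖P 0 t g‖ ^ 2 ≤ 1 - ‖⟪g, ContinuousLinearMap.adjoint (S t) g⟫‖ ^ 2) ∧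
    (∀ n, ∀ t > (0:ℝ),
      ‖P 0 t (InnerProductSpace.gramSchmidtNormed ℂ F n)‖ ^ 2 ≤ 1 - Real.exp (2 * t * (l n).re)) := by
  refine ⟨fun g hg t ht => part1 (S t) ht (hS t ht.le) (P 0 t) (fun f => hP 0 t f) g hg, ?_⟩
  have part1' : ∀ g : Kspace, ‖g‖ = 1 → ∀ t > (0:ℝ),
      ‖P 0 t g‖ ^ 2 ≤ 1 - ‖⟪g, ContinuousLinearMap.adjoint (S t) g⟫‖ ^ 2 :=
    fun g hg t ht => part1 (S t) ht (hS t ht.le) (P 0 t) (fun f => hP 0 t f) g hg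
  intro n t ht
  set gn := InnerProductSpace.gramSchmidtNormed ℂ F n with hgn
  have hexp1 : Real.exp (2 * t * (l n).re) < 1 := by
    rw [Real.exp_lt_one_iff]
    nlinarith [h1 n]
  by_cases h0 : gn = 0
  · rw [h0, map_zero, norm_zero]
    nlinarith
  · have hgn1 : ‖gn‖ = 1 := InnerProductSpace.gramSchmidtNormed_unit_length' h0
    have horth : ∀ k, k < n → ⟪gn, F k⟫ = 0 := by
      intro k hk
      rw [hgn, InnerProductSpace.gramSchmidtNormed, inner_smul_left, InnerProductSpace.gramSchmidt_inv_triangular ℂ F hk, mul_zero]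
    -- the eigen relation on the span
    set e : ℂ := Complex.exp (l n * t) with he
    set T : Kspace →L[ℂ] ℂ := innerSL ℂ (S t gn) - e • innerSL ℂ gn with hT
    have hker : Submodule.span ℂ (F '' Set.Iic n) ≤ LinearMap.ker (T : Kspace →ₗ[ℂ] ℂ) := by
      rw [Submodule.span_le]
      rintro v ⟨k, hk, rfl⟩
      have heig := eigen ht (S t) (hS t ht.le) (F k) _ _ (hF k) gn
      simp only [SetLike.mem_coe, LinearMap.mem_ker, ContinuousLinearMap.coe_coe, hT, ContinuousLinearMap.coe_sub',
        Pi.sub_apply, ContinuousLinearMap.coe_smul', Pi.smul_apply, innerSL_apply_apply,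
        smul_eq_mul]
      rcases lt_or_eq_of_le (hk : k ≤ n) with hlt | heq
      · rw [heig, horth k hlt]; ring
      · subst heq; rw [heig, he]; ring
    have hgnmem : gn ∈ Submodule.span ℂ (F '' Set.Iic n) := by
      rw [hgn, InnerProductSpace.gramSchmidtNormed]
      exact Submodule.smul_mem _ _ (InnerProductSpace.gramSchmidt_mem_span ℂ F le_rfl)
    have hTgn : T gn = 0 := hker hgnmem
    have hinner : ⟪S t gn, gn⟫ = e := by
      have h' : ⟪S t gn, gn⟫ - e * ⟪gn, gn⟫ = 0 := by
        simpa [hT, smul_eq_mul] using hTgn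
      rw [inner_self_eq_norm_sq_to_K, hgn1] at h'
      have h'' := sub_eq_zero.1 h'
      simpa using h''
    have hnorm : ‖⟪gn, ContinuousLinearMap.adjoint (S t) gn⟫‖ = Real.exp (t * (l n).re) := by
      rw [ContinuousLinearMap.adjoint_inner_right, hinner, he, Complex.norm_exp]
      congr 1
      simp [Complex.mul_re]
      ring
    have := part1' gn hgn1 t ht
    rw [hnorm] at this
    have hsq : Real.exp (t * (l n).re) ^ 2 = Real.exp (2 * t * (l n).re) := by
      rw [sq, ← Real.exp_add]
      ring_nf
    rw [hsq] at this
    exact this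
end
end

section
/- Let (V_t)_{t≥0} and (S_t)_{t≥0} be C₀-semigroups of isometries on a separable complex Hilbert space such that Δ_t := V_t − S_t is Hilbert–Schmidt for every t ≥ 0 and ‖Δ_δ‖₂ → 0 as δ → 0+. Then the map t ↦ Δ_t is right-continuous in the Hilbert–Schmidt norm: for every t ≥ 0, ‖Δ_{t+δ} − Δ_t‖₂ → 0 as δ → 0+. -/
open Filter

noncomputable section

/-- A C₀-semigroup of isometries on a Hilbert space: `V 0 = I`, `V (s+t) = V s V t`,
each `V t` (`t ≥ 0`) is an isometry, and `t ↦ V t f` is continuous on `[0,∞)`. -/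
structure IsIsometricC0Semigroup {K : Type*} [NormedAddCommGroup K]
    [InnerProductSpace ℂ K] (V : ℝ → K →L[ℂ] K) : Prop where
  isom : ∀ t ≥ (0:ℝ), ∀ f, ‖V t f‖ = ‖f‖
  map_zero : V 0 = 1
  map_add : ∀ s ≥ (0:ℝ), ∀ t ≥ (0:ℝ), V (s + t) = (V s).comp (V t)
  strong_cont : ∀ f, ContinuousOn (fun t => V t f) (Set.Ici (0:ℝ))

section Aux

variable {H : Type*} [NormedAddCommGroup H] [InnerProductSpace ℂ H] [CompleteSpace H]
  {ι : Type*}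

lemma parseval_ofReal (b : HilbertBasis ι ℂ H) (y : H) :
    ENNReal.ofReal (‖y‖ ^ 2) = ∑' i, ENNReal.ofReal (‖(inner ℂ (b i) y : ℂ)‖ ^ 2) := by
  have hsum : Summable fun i => ‖(inner ℂ (b i) y : ℂ)‖ ^ 2 :=
    b.orthonormal.inner_products_summable y
  have h2 : (0:ℝ) < (2 : ENNReal).toReal := by norm_num
  have hlp := lp.norm_rpow_eq_tsum h2 (b.repr y)
  have heq : ‖y‖ ^ 2 = ∑' i, ‖(inner ℂ (b i) y : ℂ)‖ ^ 2 := by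
    have hn : ‖b.repr y‖ = ‖y‖ := b.repr.norm_map y
    have ht : (2 : ENNReal).toReal = (2:ℝ) := by norm_num
    rw [ht] at hlp
    rw [← hn]
    calc ‖b.repr y‖ ^ 2 = ‖b.repr y‖ ^ (2:ℝ) := by
          rw [← Real.rpow_natCast ‖b.repr y‖ 2]; norm_num
      _ = ∑' i, ‖b.repr y i‖ ^ (2:ℝ) := hlp
      _ = ∑' i, ‖(inner ℂ (b i) y : ℂ)‖ ^ 2 := by
          refine tsum_congr fun i => ?_
          rw [b.repr_apply_apply, ← Real.rpow_natCast ‖(inner ℂ (b i) y : ℂ)‖ 2]; norm_num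
  rw [heq, ENNReal.ofReal_tsum_of_nonneg (fun i => by positivity) hsum]

lemma hsNormSq_eq_tsum (b : HilbertBasis ι ℂ H) (T : H →L[ℂ] H) :
    hsNormSq T = ∑' i, ENNReal.ofReal (‖T (b i)‖ ^ 2) := by
  classical
  have hinj : Function.Injective b := b.orthonormal.linearIndependent.injective
  refine le_antisymm ?_ ?_
  · -- ≤ : via Bessel through adjoint
    have key : ∀ (s : Finset H), Orthonormal ℂ (fun x : s => (x : H)) →
        ∑ x ∈ s, ENNReal.ofReal (‖T x‖ ^ 2)
          ≤ ∑' i, ENNReal.ofReal (‖(ContinuousLinearMap.adjoint T) (b i)‖ ^ 2) := by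
      intro s hs
      calc ∑ x ∈ s, ENNReal.ofReal (‖T x‖ ^ 2)
          = ∑ x ∈ s, ∑' i, ENNReal.ofReal (‖(inner ℂ (b i) (T x) : ℂ)‖ ^ 2) := by
            exact Finset.sum_congr rfl fun x _ => parseval_ofReal b (T x)
        _ = ∑' i, ∑ x ∈ s, ENNReal.ofReal (‖(inner ℂ (b i) (T x) : ℂ)‖ ^ 2) := by
            rw [Summable.tsum_finsetSum (fun x _ => ENNReal.summable)]
        _ ≤ ∑' i, ENNReal.ofReal (‖(ContinuousLinearMap.adjoint T) (b i)‖ ^ 2) := by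
            refine ENNReal.tsum_le_tsum fun i => ?_
            have : ∑ x ∈ s, ‖(inner ℂ (b i) (T x) : ℂ)‖ ^ 2
                ≤ ‖(ContinuousLinearMap.adjoint T) (b i)‖ ^ 2 := by
              have hb := hs.sum_inner_products_le (s := Finset.univ)
                ((ContinuousLinearMap.adjoint T) (b i))
              rw [← Finset.sum_attach s (fun x => ‖(inner ℂ (b i) (T x) : ℂ)‖ ^ 2)]
              refine le_trans (le_of_eq ?_) hb
              refine Finset.sum_congr rfl fun x _ => ?_
              rw [norm_inner_symm, ← ContinuousLinearMap.adjoint_inner_right]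
            calc ∑ x ∈ s, ENNReal.ofReal (‖(inner ℂ (b i) (T x) : ℂ)‖ ^ 2)
                = ENNReal.ofReal (∑ x ∈ s, ‖(inner ℂ (b i) (T x) : ℂ)‖ ^ 2) := by
                  rw [ENNReal.ofReal_sum_of_nonneg (fun x _ => by positivity)]
              _ ≤ _ := ENNReal.ofReal_le_ofReal this
    have swap : ∑' i, ENNReal.ofReal (‖(ContinuousLinearMap.adjoint T) (b i)‖ ^ 2)
        = ∑' j, ENNReal.ofReal (‖T (b j)‖ ^ 2) := by
      calc ∑' i, ENNReal.ofReal (‖(ContinuousLinearMap.adjoint T) (b i)‖ ^ 2)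
          = ∑' i, ∑' j, ENNReal.ofReal
              (‖(inner ℂ (b j) ((ContinuousLinearMap.adjoint T) (b i)) : ℂ)‖ ^ 2) :=
            tsum_congr fun i => parseval_ofReal b _
        _ = ∑' i, ∑' j, ENNReal.ofReal (‖(inner ℂ (b i) (T (b j)) : ℂ)‖ ^ 2) := by
            refine tsum_congr fun i => tsum_congr fun j => ?_
            rw [ContinuousLinearMap.adjoint_inner_right, norm_inner_symm]
        _ = ∑' j, ∑' i, ENNReal.ofReal (‖(inner ℂ (b i) (T (b j)) : ℂ)‖ ^ 2) :=
            ENNReal.tsum_comm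
        _ = ∑' j, ENNReal.ofReal (‖T (b j)‖ ^ 2) :=
            tsum_congr fun j => (parseval_ofReal b _).symm
    rw [← swap]
    exact iSup_le fun s => iSup_le fun hs => key s hs
  · -- ≥ : finite sums over images of the basis
    rw [ENNReal.tsum_eq_iSup_sum]
    refine iSup_le fun s => ?_
    have horth : Orthonormal ℂ (fun x : (s.image b : Finset H) => (x : H)) := by
      rw [orthonormal_iff_ite]
      rintro ⟨x, hx⟩ ⟨y, hy⟩
      obtain ⟨i, hi, rfl⟩ := Finset.mem_image.mp hx
      obtain ⟨j, hj, rfl⟩ := Finset.mem_image.mp hy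
      have := orthonormal_iff_ite.mp b.orthonormal i j
      simp only [this, Subtype.mk.injEq]
      congr 1
      simp [hinj.eq_iff]
    have hsum : ∑ x ∈ s.image b, ENNReal.ofReal (‖T x‖ ^ 2)
        = ∑ i ∈ s, ENNReal.ofReal (‖T (b i)‖ ^ 2) :=
      Finset.sum_image fun i _ j _ h => hinj h
    rw [← hsum]
    exact le_iSup₂ (f := fun (u : Finset H) (_ : Orthonormal ℂ (fun x : u => (x : H))) =>
      ∑ x ∈ u, ENNReal.ofReal (‖T x‖ ^ 2)) (s.image b) horth

omit [CompleteSpace H] in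
lemma hsNormSq_comp_isometry_le (T B : H →L[ℂ] H) (hB : ∀ f, ‖B f‖ = ‖f‖) :
    hsNormSq (T.comp B) ≤ hsNormSq T := by
  classical
  refine iSup_le fun s => iSup_le fun hs => ?_
  set Bi : H →ₗᵢ[ℂ] H := ⟨(B : H →ₗ[ℂ] H), hB⟩ with hBi
  have hinj : Function.Injective B := by
    intro x y h
    have h2 := hB (x - y)
    rw [map_sub, h, sub_self, norm_zero] at h2
    exact sub_eq_zero.mp (norm_eq_zero.mp h2.symm)
  have horth : Orthonormal ℂ (fun x : (s.image B : Finset H) => (x : H)) := by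
    rw [orthonormal_iff_ite]
    rintro ⟨x, hx⟩ ⟨y, hy⟩
    obtain ⟨i, hi, rfl⟩ := Finset.mem_image.mp hx
    obtain ⟨j, hj, rfl⟩ := Finset.mem_image.mp hy
    have hmm : (inner ℂ (B i) (B j) : ℂ) = inner ℂ i j := Bi.inner_map_map i j
    have hso := orthonormal_iff_ite.mp hs ⟨i, hi⟩ ⟨j, hj⟩
    simp only [Subtype.mk.injEq] at hso ⊢
    rw [hmm, hso]
    congr 1
    simp [hinj.eq_iff, Subtype.ext_iff]
  have hsum : ∑ x ∈ s.image B, ENNReal.ofReal (‖T x‖ ^ 2)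
      = ∑ i ∈ s, ENNReal.ofReal (‖T (B i)‖ ^ 2) :=
    Finset.sum_image fun i _ j _ h => hinj h
  have hcomp : ∑ x ∈ s, ENNReal.ofReal (‖(T.comp B) x‖ ^ 2)
      = ∑ x ∈ s.image B, ENNReal.ofReal (‖T x‖ ^ 2) := by
    rw [hsum]
    exact Finset.sum_congr rfl fun x _ => by simp [ContinuousLinearMap.comp_apply]
  rw [hcomp]
  exact le_iSup₂ (f := fun (u : Finset H) (_ : Orthonormal ℂ (fun x : u => (x : H))) =>
    ∑ x ∈ u, ENNReal.ofReal (‖T x‖ ^ 2)) (s.image B) horth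

omit [CompleteSpace H] in
lemma hsNormSq_add_le (X Y : H →L[ℂ] H) :
    hsNormSq (X + Y) ≤ 2 * hsNormSq X + 2 * hsNormSq Y := by
  refine iSup_le fun s => iSup_le fun hs => ?_
  calc ∑ x ∈ s, ENNReal.ofReal (‖(X + Y) x‖ ^ 2)
      ≤ ∑ x ∈ s, (2 * ENNReal.ofReal (‖X x‖ ^ 2) + 2 * ENNReal.ofReal (‖Y x‖ ^ 2)) := by
        refine Finset.sum_le_sum fun x _ => ?_
        have h1 : ‖(X + Y) x‖ ^ 2 ≤ 2 * ‖X x‖ ^ 2 + 2 * ‖Y x‖ ^ 2 := by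
          have := norm_add_le (X x) (Y x)
          simp only [ContinuousLinearMap.add_apply]
          nlinarith [norm_nonneg (X x + Y x), sq_nonneg (‖X x‖ - ‖Y x‖), sq_nonneg (‖X x‖ + ‖Y x‖)]
        calc ENNReal.ofReal (‖(X + Y) x‖ ^ 2)
            ≤ ENNReal.ofReal (2 * ‖X x‖ ^ 2 + 2 * ‖Y x‖ ^ 2) := ENNReal.ofReal_le_ofReal h1
          _ = 2 * ENNReal.ofReal (‖X x‖ ^ 2) + 2 * ENNReal.ofReal (‖Y x‖ ^ 2) := by
              rw [ENNReal.ofReal_add (by positivity) (by positivity),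
                ENNReal.ofReal_mul (by norm_num), ENNReal.ofReal_mul (by norm_num)]
              norm_num
    _ = 2 * ∑ x ∈ s, ENNReal.ofReal (‖X x‖ ^ 2) + 2 * ∑ x ∈ s, ENNReal.ofReal (‖Y x‖ ^ 2) := by
        rw [Finset.sum_add_distrib, Finset.mul_sum, Finset.mul_sum]
    _ ≤ 2 * hsNormSq X + 2 * hsNormSq Y := by
        refine add_le_add (mul_le_mul_right ?_ _) (mul_le_mul_right ?_ _)
        · exact le_iSup₂ (f := fun (u : Finset H) (_ : Orthonormal ℂ (fun x : u => (x : H))) =>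
            ∑ x ∈ u, ENNReal.ofReal (‖X x‖ ^ 2)) s hs
        · exact le_iSup₂ (f := fun (u : Finset H) (_ : Orthonormal ℂ (fun x : u => (x : H))) =>
            ∑ x ∈ u, ENNReal.ofReal (‖Y x‖ ^ 2)) s hs

end Aux

/-- let `(V_t)` and `(S_t)` be C₀-semigroups of isometries on a
separable Hilbert space such that `Δ_t = V_t - S_t` is Hilbert–Schmidt for all
`t ≥ 0` and `‖Δ_δ‖₂ → 0` as `δ → 0⁺`.  Then `t ↦ Δ_t` is right-continuous in the
Hilbert–Schmidt norm: `‖Δ_{t+δ} - Δ_t‖₂ → 0` as `δ → 0⁺` for every `t ≥ 0`. -/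
theorem stmt_14 {K : Type*} [NormedAddCommGroup K] [InnerProductSpace ℂ K]
    [CompleteSpace K] [TopologicalSpace.SeparableSpace K]
    (V S : ℝ → K →L[ℂ] K)
    (hV : IsIsometricC0Semigroup V) (hS : IsIsometricC0Semigroup S)
    (hHS : ∀ t ≥ (0:ℝ), IsHilbertSchmidt (V t - S t))
    (h0 : Tendsto (fun δ : ℝ => hsNorm (V δ - S δ)) (nhdsWithin 0 (Set.Ioi 0)) (nhds 0)) :
    ∀ t ≥ (0:ℝ),
      Tendsto (fun δ : ℝ => hsNorm ((V (t + δ) - S (t + δ)) - (V t - S t)))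
        (nhdsWithin 0 (Set.Ioi 0)) (nhds 0) := by
  intro t ht
  obtain ⟨w, b, -⟩ := exists_hilbertBasis ℂ K
  set D := V t - S t with hDdef
  have hDfin : hsNormSq D ≠ ⊤ := (hHS t ht).ne
  -- uniform bound ‖(V δ - 1) f‖ ≤ 2‖f‖ for δ ≥ 0
  have hVbound : ∀ δ ≥ (0:ℝ), ∀ f : K, ‖(V δ - 1) f‖ ≤ 2 * ‖f‖ := by
    intro δ hδ f
    have hi := hV.isom δ hδ f
    calc ‖(V δ - 1) f‖ = ‖V δ f - f‖ := by
          simp [ContinuousLinearMap.sub_apply]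
      _ ≤ ‖V δ f‖ + ‖f‖ := norm_sub_le _ _
      _ = 2 * ‖f‖ := by rw [hi]; ring
  -- strong continuity at 0⁺
  have hstrong : ∀ f : K,
      Tendsto (fun δ => (V δ - 1) f) (nhdsWithin 0 (Set.Ioi 0)) (nhds 0) := by
    intro f
    have h1 : Tendsto (fun δ => V δ f) (nhdsWithin 0 (Set.Ici 0)) (nhds f) := by
      have hc := (hV.strong_cont f) 0 Set.self_mem_Ici
      simpa [ContinuousWithinAt, hV.map_zero] using hc
    have h2 : Tendsto (fun δ => V δ f) (nhdsWithin 0 (Set.Ioi 0)) (nhds f) :=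
      h1.mono_left (nhdsWithin_mono _ Set.Ioi_subset_Ici_self)
    have h3 := h2.sub (tendsto_const_nhds (x := f))
    simpa [ContinuousLinearMap.sub_apply] using h3
  -- key1 : hsNormSq ((V δ - 1) ∘ D) → 0
  have key1 : Tendsto (fun δ => hsNormSq ((V δ - 1).comp D))
      (nhdsWithin 0 (Set.Ioi 0)) (nhds 0) := by
    rw [ENNReal.tendsto_nhds_zero]
    intro ε hε
    have hFfin : (∑' i : w, ENNReal.ofReal (‖D (b i)‖ ^ 2)) ≠ ⊤ := by
      rw [← hsNormSq_eq_tsum b D]; exact hDfin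
    have htail := ENNReal.tendsto_tsum_compl_atTop_zero
      (f := fun i : w => ENNReal.ofReal (‖D (b i)‖ ^ 2)) hFfin
    have hq : (0:ENNReal) < ε / 2 / 4 :=
      ENNReal.div_pos (ENNReal.div_pos hε.ne' (by norm_num)).ne' (by norm_num)
    obtain ⟨s, hs⟩ := (ENNReal.tendsto_nhds_zero.mp htail _ hq).exists
    -- finite part tends to zero
    have hfin : Tendsto (fun δ => ∑ i ∈ s, ENNReal.ofReal (‖(V δ - 1) (D (b i))‖ ^ 2))
        (nhdsWithin 0 (Set.Ioi 0)) (nhds 0) := by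
      have hterm : ∀ i ∈ s, Tendsto (fun δ => ENNReal.ofReal (‖(V δ - 1) (D (b i))‖ ^ 2))
          (nhdsWithin 0 (Set.Ioi 0)) (nhds 0) := by
        intro i _
        have h1 := (hstrong (D (b i))).norm
        have h2 : Tendsto (fun δ => ‖(V δ - 1) (D (b i))‖ ^ 2)
            (nhdsWithin 0 (Set.Ioi 0)) (nhds 0) := by
          have := h1.pow 2
          simpa using this
        have h3 := (ENNReal.continuous_ofReal.tendsto 0).comp h2
        simpa [Function.comp_def] using h3
      have hsum := tendsto_finset_sum s hterm
      simpa using hsum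
    have hev1 := ENNReal.tendsto_nhds_zero.mp hfin (ε/2)
      (ENNReal.div_pos hε.ne' (by norm_num))
    filter_upwards [hev1, self_mem_nhdsWithin] with δ h1 hδ'
    have hδ : δ ∈ Set.Ioi (0:ℝ) := hδ'
    have hδ0 : (0:ℝ) ≤ δ := le_of_lt hδ
    rw [hsNormSq_eq_tsum b]
    have hterm_eq : ∀ i : w, ENNReal.ofReal (‖((V δ - 1).comp D) (b i)‖ ^ 2)
        = ENNReal.ofReal (‖(V δ - 1) (D (b i))‖ ^ 2) := fun i => by
      simp [ContinuousLinearMap.comp_apply]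
    calc (∑' i : w, ENNReal.ofReal (‖((V δ - 1).comp D) (b i)‖ ^ 2))
        = ∑' i : w, ENNReal.ofReal (‖(V δ - 1) (D (b i))‖ ^ 2) := tsum_congr hterm_eq
      _ = (∑' i : (↑s : Set w), ENNReal.ofReal (‖(V δ - 1) (D (b i))‖ ^ 2))
            + ∑' i : ↥(↑s : Set w)ᶜ, ENNReal.ofReal (‖(V δ - 1) (D (b i))‖ ^ 2) :=
          (Summable.tsum_add_tsum_compl ENNReal.summable ENNReal.summable).symm
      _ = (∑ i ∈ s, ENNReal.ofReal (‖(V δ - 1) (D (b i))‖ ^ 2))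
            + ∑' i : ↥(↑s : Set w)ᶜ, ENNReal.ofReal (‖(V δ - 1) (D (b i))‖ ^ 2) := by
          rw [Finset.tsum_subtype' s (fun i => ENNReal.ofReal (‖(V δ - 1) (D (b i))‖ ^ 2))]
      _ ≤ ε/2 + ε/2 := by
          refine add_le_add h1 ?_
          have hb4 : ∀ i : ↥(↑s : Set w)ᶜ, ENNReal.ofReal (‖(V δ - 1) (D (b i))‖ ^ 2)
              ≤ 4 * ENNReal.ofReal (‖D (b i)‖ ^ 2) := by
            intro i
            have hbd := hVbound δ hδ0 (D (b i))
            calc ENNReal.ofReal (‖(V δ - 1) (D (b i))‖ ^ 2)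
                ≤ ENNReal.ofReal (4 * ‖D (b i)‖ ^ 2) := by
                  refine ENNReal.ofReal_le_ofReal ?_
                  nlinarith [norm_nonneg ((V δ - 1) (D (b i))), norm_nonneg (D (b i))]
              _ = 4 * ENNReal.ofReal (‖D (b i)‖ ^ 2) := by
                  rw [ENNReal.ofReal_mul (by norm_num)]; norm_num
          calc (∑' i : ↥(↑s : Set w)ᶜ, ENNReal.ofReal (‖(V δ - 1) (D (b i))‖ ^ 2))
              ≤ ∑' i : ↥(↑s : Set w)ᶜ, 4 * ENNReal.ofReal (‖D (b i)‖ ^ 2) :=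
                ENNReal.tsum_le_tsum hb4
            _ = 4 * ∑' i : ↥(↑s : Set w)ᶜ, ENNReal.ofReal (‖D (b i)‖ ^ 2) :=
                ENNReal.tsum_mul_left
            _ ≤ 4 * (ε/2/4) := by
                refine mul_le_mul_right ?_ _
                exact hs
            _ ≤ ε/2 := ENNReal.mul_div_le
      _ = ε := ENNReal.add_halves ε
  -- hsNormSq (V δ - S δ) → 0
  have hSq0 : Tendsto (fun δ => hsNormSq (V δ - S δ)) (nhdsWithin 0 (Set.Ioi 0)) (nhds 0) := by
    have hev : ∀ᶠ δ in nhdsWithin (0:ℝ) (Set.Ioi 0),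
        ENNReal.ofReal ((hsNorm (V δ - S δ)) ^ 2) = hsNormSq (V δ - S δ) := by
      filter_upwards [self_mem_nhdsWithin] with δ hδ'
      have hδ : δ ∈ Set.Ioi (0:ℝ) := hδ'
      have hfin : hsNormSq (V δ - S δ) ≠ ⊤ := (hHS δ (le_of_lt hδ)).ne
      rw [hsNorm, Real.sq_sqrt ENNReal.toReal_nonneg, ENNReal.ofReal_toReal hfin]
    have h2 : Tendsto (fun δ => ENNReal.ofReal ((hsNorm (V δ - S δ)) ^ 2))
        (nhdsWithin 0 (Set.Ioi 0)) (nhds 0) := by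
      have hp : Tendsto (fun δ => (hsNorm (V δ - S δ)) ^ 2)
          (nhdsWithin 0 (Set.Ioi 0)) (nhds 0) := by simpa using h0.pow 2
      have h3 := (ENNReal.continuous_ofReal.tendsto 0).comp hp
      simpa [Function.comp_def] using h3
    exact Tendsto.congr' hev h2
  -- key2
  have key2 : Tendsto (fun δ => hsNormSq ((V δ - S δ).comp (S t)))
      (nhdsWithin 0 (Set.Ioi 0)) (nhds 0) := by
    refine tendsto_of_tendsto_of_tendsto_of_le_of_le' tendsto_const_nhds hSq0 ?_ ?_
    · filter_upwards with δ using by simp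
    · filter_upwards with δ using
        hsNormSq_comp_isometry_le (V δ - S δ) (S t) (hS.isom t ht)
  -- decomposition
  have hdecomp : ∀ᶠ δ in nhdsWithin (0:ℝ) (Set.Ioi 0),
      (V (t+δ) - S (t+δ)) - D = (V δ - 1).comp D + (V δ - S δ).comp (S t) := by
    filter_upwards [self_mem_nhdsWithin] with δ hδ'
    have hδ : δ ∈ Set.Ioi (0:ℝ) := hδ'
    have hδ0 : (0:ℝ) ≤ δ := le_of_lt hδ
    have hV' : V (t + δ) = (V δ).comp (V t) := by
      rw [add_comm]; exact hV.map_add δ hδ0 t ht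
    have hS' : S (t + δ) = (S δ).comp (S t) := by
      rw [add_comm]; exact hS.map_add δ hδ0 t ht
    ext f
    simp only [hV', hS', hDdef, ContinuousLinearMap.sub_apply,
      ContinuousLinearMap.comp_apply, ContinuousLinearMap.add_apply,
      ContinuousLinearMap.one_apply, map_sub]
    abel
  have keysum : Tendsto (fun δ => hsNormSq ((V (t+δ) - S (t+δ)) - D))
      (nhdsWithin 0 (Set.Ioi 0)) (nhds 0) := by
    have h1 := ENNReal.Tendsto.const_mul (a := (2:ENNReal)) key1
      (Or.inr (by norm_num))
    have h2 := ENNReal.Tendsto.const_mul (a := (2:ENNReal)) key2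
      (Or.inr (by norm_num))
    rw [mul_zero] at h1 h2
    have hub := h1.add h2
    rw [add_zero] at hub
    refine tendsto_of_tendsto_of_tendsto_of_le_of_le' tendsto_const_nhds hub ?_ ?_
    · filter_upwards with δ using by simp
    · filter_upwards [hdecomp] with δ h
      rw [h]
      exact hsNormSq_add_le _ _
  -- conclude
  have htoReal : Tendsto (fun δ => (hsNormSq ((V (t+δ) - S (t+δ)) - D)).toReal)
      (nhdsWithin 0 (Set.Ioi 0)) (nhds 0) := by
    have h4 := (ENNReal.tendsto_toReal (by simp : (0:ENNReal) ≠ ⊤)).comp keysum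
    simpa [Function.comp_def] using h4
  have h5 := (Real.continuous_sqrt.tendsto 0).comp htoReal
  simpa [hsNorm, Function.comp_def] using h5
end
end
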